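/- arXiv:2511.02789 — 3 statements merged into one kernel-verified Lean document; each statement's English description precedes it below -/
import Mathlib

section
/- For simple functions f, g on ℝ (finite linear combinations of characteristic functions of dyadic intervals), the pointwise product satisfies f(x)g(x) = π^{(0,1)}(f,g)(x) + π^{(1,0)}(f,g)(x) + π^{(1,1)}(f,g)(x) for almost every x ∈ ℝ. -/
open MeasureTheory Set
open scoped ENNReal Classical

noncomputable section

/-- The dyadic interval `[n·2^k, (n+1)·2^k)`, indexed by `p = (k, n)`. -/
def dyadicI (p : ℤ × ℤ) : Set ℝ := Set.Ico ((p.2 : ℝ) * 2 ^ p.1) ((p.2 + 1 : ℝ) * 2 ^ p.1)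

/-- The length `|I| = 2^k` of the dyadic interval indexed by `p = (k, n)`. -/
def dlen (p : ℤ × ℤ) : ℝ := (2 : ℝ) ^ p.1

/-- The `L²`-normalized Haar function of the dyadic interval indexed by `p = (k, n)`. -/
def haar (p : ℤ × ℤ) (x : ℝ) : ℝ :=
  (2 : ℝ) ^ (-(p.1 : ℝ) / 2) *
    ((dyadicI (p.1 - 1, 2 * p.2)).indicator 1 x - (dyadicI (p.1 - 1, 2 * p.2 + 1)).indicator 1 x)

/-- The normalized indicator `χ_I/|I|`. -/
def nind (p : ℤ × ℤ) (x : ℝ) : ℝ := (dlen p)⁻¹ * (dyadicI p).indicator 1 x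

/-- Index of a dyadic rectangle `R = I × J`. -/
abbrev RectIx : Type := (ℤ × ℤ) × (ℤ × ℤ)

/-- The dyadic rectangle `I × J`. -/
def dyadicR (r : RectIx) : Set (ℝ × ℝ) := (dyadicI r.1) ×ˢ (dyadicI r.2)

/-- The area `|R| = |I|·|J|`. -/
def rlen (r : RectIx) : ℝ := dlen r.1 * dlen r.2

/-- The rectangular Haar function `h_R = h_I ⊗ h_J`. -/
def haarR (r : RectIx) (z : ℝ × ℝ) : ℝ := haar r.1 z.1 * haar r.2 z.2

/-- The rectangular Haar coefficient `f_R = ⟨f, h_R⟩`. -/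
def haarCoefR (f : ℝ × ℝ → ℝ) (r : RectIx) : ℝ := ∫ z : ℝ × ℝ, f z * haarR r z

/-- The average of `g` over the dyadic rectangle `R`. -/
def avgR (g : ℝ × ℝ → ℝ) (r : RectIx) : ℝ := (rlen r)⁻¹ * ∫ z in dyadicR r, g z

/-- The average of `u` over the dyadic interval `I`. -/
def avgI (u : ℝ → ℝ) (p : ℤ × ℤ) : ℝ := (dlen p)⁻¹ * ∫ x in dyadicI p, u x

/-- The Haar coefficient in the second variable, `f_J(x) = ⟨f(x,·), h_J⟩`. -/
def coefSnd (f : ℝ × ℝ → ℝ) (q : ℤ × ℤ) (x : ℝ) : ℝ := ∫ y : ℝ, f (x, y) * haar q y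

/-- The Haar coefficient in the first variable, `f_I(y) = ⟨f(·,y), h_I⟩`. -/
def coefFst (f : ℝ × ℝ → ℝ) (p : ℤ × ℤ) (y : ℝ) : ℝ := ∫ x : ℝ, f (x, y) * haar p x

/-- The bi-parameter dyadic square function. -/
def sqR (f : ℝ × ℝ → ℝ) (z : ℝ × ℝ) : ℝ :=
  Real.sqrt (∑' r : RectIx, (haarCoefR f r) ^ 2 * (rlen r)⁻¹ * (dyadicR r).indicator 1 z)

/-- The strong dyadic maximal function. -/
def strongMax (g : ℝ × ℝ → ℝ) (z : ℝ × ℝ) : ℝ :=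
  ⨆ r : {r : RectIx // z ∈ dyadicR r}, |avgR g r.1|

/-- The one-parameter dyadic maximal function. -/
def dyadMax (u : ℝ → ℝ) (x : ℝ) : ℝ := ⨆ p : {p : ℤ × ℤ // x ∈ dyadicI p}, |avgI u p.1|

/-- `f` is a finite linear combination of indicators of dyadic intervals. -/
def IsDyadicSimple (f : ℝ → ℝ) : Prop :=
  ∃ (s : Finset (ℤ × ℤ)) (c : ℤ × ℤ → ℝ),
    f = fun x => ∑ p ∈ s, c p * (dyadicI p).indicator 1 x

/-- `g` is a finite linear combination of indicators of dyadic rectangles. -/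
def IsDyadicSimple2 (g : ℝ × ℝ → ℝ) : Prop :=
  ∃ (s : Finset RectIx) (c : RectIx → ℝ),
    g = fun z => ∑ r ∈ s, c r * (dyadicR r).indicator 1 z

/-- `f` is a finite linear combination of rectangular Haar functions. -/
def FinHaar2 (f : ℝ × ℝ → ℝ) : Prop :=
  ∃ (s : Finset RectIx) (c : RectIx → ℝ), f = fun z => ∑ r ∈ s, c r * haarR r z

/-- The paraproduct `π²_g(f) = Σ_R f_R ⟨g⟩_R h_R`. -/
def pi2 (g f : ℝ × ℝ → ℝ) (z : ℝ × ℝ) : ℝ :=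
  ∑' r : RectIx, haarCoefR f r * avgR g r * haarR r z

/-- The mixed paraproduct `π³_g(f) = Σ_{I,J} ⟨f_J⟩_I ⟨g_I⟩_J h_I ⊗ h_J`. -/
def pi3 (g f : ℝ × ℝ → ℝ) (z : ℝ × ℝ) : ℝ :=
  ∑' r : RectIx, avgI (coefSnd f r.2) r.1 * avgI (coefFst g r.1) r.2 * haarR r z

/-- The mixed paraproduct `π⁴_g(f) = Σ_{I,J} ⟨f_J⟩_I g_{I×J} h_I ⊗ χ̄_J`. -/
def pi4 (g f : ℝ × ℝ → ℝ) (z : ℝ × ℝ) : ℝ :=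
  ∑' r : RectIx, avgI (coefSnd f r.2) r.1 * haarCoefR g r * haar r.1 z.1 * nind r.2 z.2

/-- The mixed square-maximal operator `S₂M₁`. -/
def S2M1 (f : ℝ × ℝ → ℝ) (z : ℝ × ℝ) : ℝ :=
  Real.sqrt (∑' q : ℤ × ℤ,
    (dyadMax (coefSnd f q) z.1) ^ 2 * (dlen q)⁻¹ * (dyadicI q).indicator 1 z.2)

/-- The mixed maximal-square operator `M₂S₁`. -/
def M2S1 (g : ℝ × ℝ → ℝ) (z : ℝ × ℝ) : ℝ :=
  ⨆ q : {q : ℤ × ℤ // z.2 ∈ dyadicI q},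
    Real.sqrt (∑' p : ℤ × ℤ,
      (avgI (coefFst g p) q.1) ^ 2 * (dlen p)⁻¹ * (dyadicI p).indicator 1 z.1)

/-- The mixed maximal-square operator `M₁S₂`. -/
def M1S2 (f : ℝ × ℝ → ℝ) (z : ℝ × ℝ) : ℝ :=
  ⨆ p : {p : ℤ × ℤ // z.1 ∈ dyadicI p},
    Real.sqrt (∑' q : ℤ × ℤ,
      (avgI (coefSnd f q) p.1) ^ 2 * (dlen q)⁻¹ * (dyadicI q).indicator 1 z.2)

/-- The `H^p_d(ℝ⊗ℝ)` quasi-norm `‖M(f)‖_{L^p}`. -/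
def hpNorm (p : ℝ) (f : ℝ × ℝ → ℝ) : ℝ≥0∞ :=
  eLpNorm (strongMax f) (ENNReal.ofReal p) volume


namespace ParaProdAux

open Filter

lemma tzp (k : ℤ) : (0:ℝ) < 2 ^ k := zpow_pos (by norm_num) k

lemma mem_dyadicI {x : ℝ} {k n : ℤ} :
    x ∈ dyadicI (k, n) ↔ (n : ℝ) * 2 ^ k ≤ x ∧ x < ((n : ℝ) + 1) * 2 ^ k := by
  simp [dyadicI, Set.mem_Ico]

lemma floor_eq_of_mem {x : ℝ} {k n : ℤ} (h : x ∈ dyadicI (k, n)) : n = ⌊x / 2 ^ k⌋ := by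
  have hp := tzp k
  rw [mem_dyadicI] at h
  symm
  rw [Int.floor_eq_iff]
  exact ⟨(le_div_iff₀ hp).2 h.1, (div_lt_iff₀ hp).2 h.2⟩

lemma mem_floor (x : ℝ) (k : ℤ) : x ∈ dyadicI (k, ⌊x / 2 ^ k⌋) := by
  have hp := tzp k
  rw [mem_dyadicI]
  exact ⟨(le_div_iff₀ hp).1 (Int.floor_le _), (div_lt_iff₀ hp).1 (Int.lt_floor_add_one _)⟩

lemma measSet (p : ℤ × ℤ) : MeasurableSet (dyadicI p) := measurableSet_Ico

lemma vol (p : ℤ × ℤ) : volume (dyadicI p) = ENNReal.ofReal ((2:ℝ) ^ p.1) := by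
  rw [dyadicI, Real.volume_Ico]
  congr 1
  ring

lemma half_union (k n : ℤ) :
    dyadicI (k - 1, 2 * n) ∪ dyadicI (k - 1, 2 * n + 1) = dyadicI (k, n) := by
  have h2 : (2:ℝ) ^ k = 2 * 2 ^ (k - 1) := by
    rw [mul_comm, ← zpow_add_one₀ (two_ne_zero : (2:ℝ) ≠ 0)]
    congr 1
    omega
  have hp := tzp (k - 1)
  have e1 : ((2 * n : ℤ) : ℝ) * 2 ^ (k - 1) = (n : ℝ) * 2 ^ k := by
    push_cast; rw [h2]; ring
  have e2 : (((2 * n : ℤ) : ℝ) + 1) * 2 ^ (k - 1) = ((2 * n + 1 : ℤ) : ℝ) * 2 ^ (k - 1) := by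
    push_cast; ring
  have e3 : (((2 * n + 1 : ℤ) : ℝ) + 1) * 2 ^ (k - 1) = ((n : ℝ) + 1) * 2 ^ k := by
    push_cast; rw [h2]; ring
  have h1 : ((2 * n : ℤ) : ℝ) * 2 ^ (k - 1) ≤ ((2 * n + 1 : ℤ) : ℝ) * 2 ^ (k - 1) := by
    push_cast; nlinarith
  have h4 : ((2 * n + 1 : ℤ) : ℝ) * 2 ^ (k - 1) ≤ (((2 * n + 1 : ℤ) : ℝ) + 1) * 2 ^ (k - 1) := by
    push_cast; nlinarith
  simp only [dyadicI]
  rw [e2, Set.Ico_union_Ico_eq_Ico h1 h4, e1, e3]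

lemma haar_left {x : ℝ} {k n : ℤ} (h : x ∈ dyadicI (k - 1, 2 * n)) :
    haar (k, n) x = 2 ^ (-(k : ℝ) / 2) := by
  have h2 : x ∉ dyadicI (k - 1, 2 * n + 1) := by
    intro h'
    have e1 := floor_eq_of_mem h
    have e2 := floor_eq_of_mem h'
    omega
  simp [haar, Set.indicator_of_mem h, Set.indicator_of_notMem h2]

lemma haar_right {x : ℝ} {k n : ℤ} (h : x ∈ dyadicI (k - 1, 2 * n + 1)) :
    haar (k, n) x = -(2 ^ (-(k : ℝ) / 2)) := by
  have h2 : x ∉ dyadicI (k - 1, 2 * n) := by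
    intro h'
    have e1 := floor_eq_of_mem h
    have e2 := floor_eq_of_mem h'
    omega
  simp [haar, Set.indicator_of_mem h, Set.indicator_of_notMem h2]

lemma haar_eq_zero {x : ℝ} {p : ℤ × ℤ} (h : x ∉ dyadicI p) : haar p x = 0 := by
  obtain ⟨k, n⟩ := p
  have h1 : x ∉ dyadicI (k - 1, 2 * n) := fun hm => h (by
    rw [← half_union k n]; exact Or.inl hm)
  have h2 : x ∉ dyadicI (k - 1, 2 * n + 1) := fun hm => h (by
    rw [← half_union k n]; exact Or.inr hm)
  simp [haar, Set.indicator_of_notMem h1, Set.indicator_of_notMem h2]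

lemma nind_eq_zero {x : ℝ} {p : ℤ × ℤ} (h : x ∉ dyadicI p) : nind p x = 0 := by
  simp [nind, Set.indicator_of_notMem h]

lemma rpow_half_sq (k : ℤ) :
    (2:ℝ) ^ (-(k : ℝ) / 2) * 2 ^ (-(k : ℝ) / 2) = ((2:ℝ) ^ k)⁻¹ := by
  rw [← Real.rpow_add (by norm_num : (0:ℝ) < 2),
      show -(k : ℝ) / 2 + -(k : ℝ) / 2 = ((-k : ℤ) : ℝ) by push_cast; ring,
      Real.rpow_intCast, zpow_neg]

lemma haar_sq {x : ℝ} {k n : ℤ} (h : x ∈ dyadicI (k, n)) :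
    haar (k, n) x * haar (k, n) x = ((2:ℝ) ^ k)⁻¹ := by
  rw [← half_union k n] at h
  rcases h with h | h
  · rw [haar_left h]; exact rpow_half_sq k
  · rw [haar_right h, neg_mul_neg]; exact rpow_half_sq k

lemma integrable_simple {f : ℝ → ℝ} (hf : IsDyadicSimple f) : Integrable f volume := by
  obtain ⟨s, c, rfl⟩ := hf
  apply integrable_finset_sum
  intro p _
  apply Integrable.const_mul
  rw [integrable_indicator_iff (measSet p)]
  exact integrableOn_const (by rw [vol]; exact ENNReal.ofReal_ne_top)

lemma integral_mul_nind {f : ℝ → ℝ} (hf : Integrable f volume) (p : ℤ × ℤ) :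
    ∫ y, f y * nind p y = avgI f p := by
  unfold nind avgI
  have e : ∀ y, f y * ((dlen p)⁻¹ * (dyadicI p).indicator 1 y)
      = (dlen p)⁻¹ * (dyadicI p).indicator f y := by
    intro y
    by_cases h : y ∈ dyadicI p <;>
      simp [Set.indicator_of_mem, Set.indicator_of_notMem, h] <;> ring
  simp_rw [e]
  rw [integral_const_mul, integral_indicator (measSet p)]

lemma integral_mul_haar {f : ℝ → ℝ} (hf : Integrable f volume) (k n : ℤ) :
    ∫ y, f y * haar (k, n) y =
      2 ^ (-(k : ℝ) / 2) *
        ((∫ y in dyadicI (k - 1, 2 * n), f y) - ∫ y in dyadicI (k - 1, 2 * n + 1), f y) := by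
  have e : ∀ y, f y * haar (k, n) y
      = 2 ^ (-(k : ℝ) / 2) * ((dyadicI (k - 1, 2 * n)).indicator f y
          - (dyadicI (k - 1, 2 * n + 1)).indicator f y) := by
    intro y
    unfold haar
    simp only
    by_cases h1 : y ∈ dyadicI (k - 1, 2 * n) <;> by_cases h2 : y ∈ dyadicI (k - 1, 2 * n + 1) <;>
      simp [Set.indicator_apply, h1, h2] <;> ring
  simp_rw [e]
  rw [integral_const_mul,
      integral_sub ((integrable_indicator_iff (measSet _)).2 hf.integrableOn)
        ((integrable_indicator_iff (measSet _)).2 hf.integrableOn),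
      integral_indicator (measSet _), integral_indicator (measSet _)]

/-- The dyadic conditional expectation at scale `2^k`, evaluated at `x`. -/
def EkD (u : ℝ → ℝ) (x : ℝ) (k : ℤ) : ℝ := avgI u (k, ⌊x / 2 ^ k⌋)

lemma setIntegral_split {u : ℝ → ℝ} (hu : Integrable u volume) (k n : ℤ) :
    ∫ y in dyadicI (k, n), u y =
      (∫ y in dyadicI (k - 1, 2 * n), u y) + ∫ y in dyadicI (k - 1, 2 * n + 1), u y := by
  rw [← half_union k n]
  apply setIntegral_union _ (measSet _) hu.integrableOn hu.integrableOn
  rw [Set.disjoint_left]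
  intro y h1 h2
  have e1 := floor_eq_of_mem h1
  have e2 := floor_eq_of_mem h2
  omega

lemma inv_zpow_sub_one (k : ℤ) : ((2:ℝ) ^ (k - 1))⁻¹ = 2 * ((2:ℝ) ^ k)⁻¹ := by
  rw [← zpow_neg, show -(k - 1) = 1 + -k by ring, zpow_add₀ (two_ne_zero : (2:ℝ) ≠ 0),
      zpow_one, zpow_neg]

lemma delta_eq {u : ℝ → ℝ} (hu : Integrable u volume) (x : ℝ) (k : ℤ) :
    (∫ y, u y * haar (k, ⌊x / 2 ^ k⌋) y) * haar (k, ⌊x / 2 ^ k⌋) x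
      = EkD u x (k - 1) - EkD u x k := by
  set n := ⌊x / 2 ^ k⌋ with hn
  set A := ∫ y in dyadicI (k - 1, 2 * n), u y with hA
  set B := ∫ y in dyadicI (k - 1, 2 * n + 1), u y with hB
  have hx : x ∈ dyadicI (k, n) := by rw [hn]; exact mem_floor x k
  have hEk : EkD u x k = ((2:ℝ) ^ k)⁻¹ * (A + B) := by
    unfold EkD avgI dlen
    rw [← hn, setIntegral_split hu k n, ← hA, ← hB]
  have hxu : x ∈ dyadicI (k - 1, 2 * n) ∪ dyadicI (k - 1, 2 * n + 1) := by
    rw [half_union k n]; exact hx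
  rw [integral_mul_haar hu k n]
  have hsq := rpow_half_sq k
  rcases hxu with h | h
  · have hfl : ⌊x / 2 ^ (k - 1)⌋ = 2 * n := (floor_eq_of_mem h).symm
    have hEk' : EkD u x (k - 1) = ((2:ℝ) ^ (k - 1))⁻¹ * A := by
      unfold EkD avgI dlen
      rw [hfl, ← hA]
    rw [haar_left h, hEk, hEk', inv_zpow_sub_one]
    linear_combination (A - B) * hsq
  · have hfl : ⌊x / 2 ^ (k - 1)⌋ = 2 * n + 1 := (floor_eq_of_mem h).symm
    have hEk' : EkD u x (k - 1) = ((2:ℝ) ^ (k - 1))⁻¹ * B := by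
      unfold EkD avgI dlen
      rw [hfl, ← hB]
    rw [haar_right h, hEk, hEk', inv_zpow_sub_one]
    linear_combination (B - A) * hsq

lemma term3_eq {u v : ℝ → ℝ} (hu : Integrable u volume) (hv : Integrable v volume)
    (x : ℝ) (k : ℤ) :
    (∫ y, u y * haar (k, ⌊x / 2 ^ k⌋) y) * (∫ y, v y * haar (k, ⌊x / 2 ^ k⌋) y) *
        nind (k, ⌊x / 2 ^ k⌋) x
      = (EkD u x (k - 1) - EkD u x k) * (EkD v x (k - 1) - EkD v x k) := by
  rw [← delta_eq hu x k, ← delta_eq hv x k]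
  have hx : x ∈ dyadicI (k, ⌊x / 2 ^ k⌋) := mem_floor x k
  have h1 : nind (k, ⌊x / 2 ^ k⌋) x
      = haar (k, ⌊x / 2 ^ k⌋) x * haar (k, ⌊x / 2 ^ k⌋) x := by
    rw [haar_sq hx]
    unfold nind dlen
    rw [Set.indicator_of_mem hx]
    simp
  rw [h1]
  ring

lemma Ek_eq_self {u : ℝ → ℝ} {x : ℝ} {k : ℤ}
    (h : ∀ y ∈ dyadicI (k, ⌊x / 2 ^ k⌋), u y = u x) : EkD u x k = u x := by
  unfold EkD avgI dlen
  rw [setIntegral_congr_fun (measSet _) h, setIntegral_const, measureReal_def, vol]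
  simp only [ENNReal.toReal_ofReal (le_of_lt (tzp k)), smul_eq_mul]
  rw [inv_mul_cancel_left₀ (ne_of_gt (tzp k))]

lemma Ek_abs_le {u : ℝ → ℝ} (hu : Integrable u volume) (x : ℝ) (k : ℤ) :
    |EkD u x k| ≤ ((2:ℝ) ^ k)⁻¹ * ∫ y, |u y| := by
  have h1 : |∫ y in dyadicI (k, ⌊x / 2 ^ k⌋), u y|
      ≤ ∫ y in dyadicI (k, ⌊x / 2 ^ k⌋), |u y| := by
    simpa [Real.norm_eq_abs] using
      norm_integral_le_integral_norm (μ := volume.restrict (dyadicI (k, ⌊x / 2 ^ k⌋))) u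
  have h2 : ∫ y in dyadicI (k, ⌊x / 2 ^ k⌋), |u y| ≤ ∫ y, |u y| :=
    setIntegral_le_integral hu.abs (Eventually.of_forall fun y => abs_nonneg _)
  unfold EkD avgI dlen
  rw [abs_mul, abs_inv, abs_of_pos (tzp k)]
  exact mul_le_mul_of_nonneg_left (h1.trans h2) (le_of_lt (by positivity))

lemma exists_zpow_le {ε : ℝ} (hε : 0 < ε) : ∃ k₀ : ℤ, ∀ k ≤ k₀, (2:ℝ) ^ k ≤ ε := by
  obtain ⟨n, hn⟩ := exists_pow_lt_of_lt_one hε (by norm_num : (1:ℝ) / 2 < 1)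
  refine ⟨-(n : ℤ), fun k hk => ?_⟩
  have h1 : (2:ℝ) ^ k ≤ 2 ^ (-(n : ℤ)) := zpow_le_zpow_right₀ one_le_two hk
  have h2 : (2:ℝ) ^ (-(n : ℤ)) = (1 / 2 : ℝ) ^ n := by
    rw [zpow_neg, zpow_natCast, ← inv_pow, one_div]
  linarith [h2 ▸ h1]

lemma near {x y : ℝ} {k : ℤ} (hy : y ∈ dyadicI (k, ⌊x / 2 ^ k⌋)) :
    x - 2 ^ k < y ∧ y < x + 2 ^ k := by
  have hx := mem_floor x k
  rw [mem_dyadicI] at hx hy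
  constructor <;> nlinarith [tzp k]

lemma const_on (x : ℝ) (hx : ∀ p : ℤ × ℤ, x ≠ (p.2 : ℝ) * 2 ^ p.1) (q : ℤ × ℤ) :
    ∃ k₀ : ℤ, ∀ k ≤ k₀, ∀ y ∈ dyadicI (k, ⌊x / 2 ^ k⌋),
      (dyadicI q).indicator (1 : ℝ → ℝ) y = (dyadicI q).indicator 1 x := by
  obtain ⟨j, m⟩ := q
  have hxa : x ≠ (m : ℝ) * 2 ^ j := hx (j, m)
  have hxb : x ≠ ((m : ℝ) + 1) * 2 ^ j := by
    have := hx (j, m + 1)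
    push_cast at this
    exact this
  by_cases hm : x ∈ dyadicI (j, m)
  · have h1 : (m : ℝ) * 2 ^ j < x := lt_of_le_of_ne (mem_dyadicI.1 hm).1 (Ne.symm hxa)
    have h2 : x < ((m : ℝ) + 1) * 2 ^ j := (mem_dyadicI.1 hm).2
    obtain ⟨k₀, hk₀⟩ := exists_zpow_le
      (lt_min (by linarith) (by linarith) :
        (0:ℝ) < min (x - (m : ℝ) * 2 ^ j) (((m : ℝ) + 1) * 2 ^ j - x))
    refine ⟨k₀, fun k hk y hy => ?_⟩
    have hkk := hk₀ k hk
    have hnear := near hy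
    have hy' : y ∈ dyadicI (j, m) := by
      rw [mem_dyadicI]
      constructor
      · have := min_le_left (x - (m : ℝ) * 2 ^ j) (((m : ℝ) + 1) * 2 ^ j - x)
        linarith [hnear.1]
      · have := min_le_right (x - (m : ℝ) * 2 ^ j) (((m : ℝ) + 1) * 2 ^ j - x)
        linarith [hnear.2]
    simp [Set.indicator_of_mem hy', Set.indicator_of_mem hm]
  · rw [mem_dyadicI, not_and_or, not_le, not_lt] at hm
    rcases hm with h | h
    · obtain ⟨k₀, hk₀⟩ := exists_zpow_le (by linarith : (0:ℝ) < (m : ℝ) * 2 ^ j - x)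
      refine ⟨k₀, fun k hk y hy => ?_⟩
      have hkk := hk₀ k hk
      have hnear := near hy
      have hy' : y ∉ dyadicI (j, m) := by
        rw [mem_dyadicI]
        push_neg
        intro hya
        linarith [hnear.2]
      have hx' : x ∉ dyadicI (j, m) := by
        rw [mem_dyadicI]
        push_neg
        intro hxa2
        linarith
      rw [Set.indicator_of_notMem hy', Set.indicator_of_notMem hx']
    · have h2 : ((m : ℝ) + 1) * 2 ^ j < x := lt_of_le_of_ne h (Ne.symm hxb)
      obtain ⟨k₀, hk₀⟩ := exists_zpow_le (by linarith : (0:ℝ) < x - ((m : ℝ) + 1) * 2 ^ j)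
      refine ⟨k₀, fun k hk y hy => ?_⟩
      have hkk := hk₀ k hk
      have hnear := near hy
      have hy' : y ∉ dyadicI (j, m) := by
        rw [mem_dyadicI]
        push_neg
        intro _
        linarith [hnear.1]
      have hx' : x ∉ dyadicI (j, m) := by
        rw [mem_dyadicI]
        push_neg
        intro _
        linarith
      rw [Set.indicator_of_notMem hy', Set.indicator_of_notMem hx']

lemma exists_const_aux (x : ℝ) (hx : ∀ p : ℤ × ℤ, x ≠ (p.2 : ℝ) * 2 ^ p.1)
    (c : ℤ × ℤ → ℝ) (s : Finset (ℤ × ℤ)) :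
    ∃ k₀ : ℤ, ∀ k ≤ k₀, ∀ y ∈ dyadicI (k, ⌊x / 2 ^ k⌋),
      ∑ p ∈ s, c p * (dyadicI p).indicator 1 y = ∑ p ∈ s, c p * (dyadicI p).indicator 1 x := by
  classical
  induction s using Finset.induction_on with
  | empty => exact ⟨0, by simp⟩
  | @insert q s hq ih =>
    obtain ⟨k₁, h1⟩ := ih
    obtain ⟨k₂, h2⟩ := const_on x hx q
    refine ⟨min k₁ k₂, fun k hk y hy => ?_⟩
    simp only [Finset.sum_insert hq]
    rw [h1 k (hk.trans (min_le_left _ _)) y hy, h2 k (hk.trans (min_le_right _ _)) y hy]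

lemma exists_const (x : ℝ) (hx : ∀ p : ℤ × ℤ, x ≠ (p.2 : ℝ) * 2 ^ p.1)
    {u : ℝ → ℝ} (hu : IsDyadicSimple u) :
    ∃ k₀ : ℤ, ∀ k ≤ k₀, ∀ y ∈ dyadicI (k, ⌊x / 2 ^ k⌋), u y = u x := by
  obtain ⟨s, c, rfl⟩ := hu
  obtain ⟨k₀, h⟩ := exists_const_aux x hx c s
  exact ⟨k₀, fun k hk y hy => h k hk y hy⟩

lemma inv_pow_two_sq (n : ℕ) : ((2:ℝ) ^ n)⁻¹ * ((2:ℝ) ^ n)⁻¹ = (1 / 4 : ℝ) ^ n := by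
  rw [← mul_inv, ← mul_pow, ← inv_pow]
  norm_num

lemma inv_sq_zpow_add (k₀ : ℤ) (n : ℕ) :
    ((2:ℝ) ^ (k₀ + (n : ℤ)))⁻¹ * ((2:ℝ) ^ (k₀ + (n : ℤ)))⁻¹
      = (((2:ℝ) ^ k₀)⁻¹ * ((2:ℝ) ^ k₀)⁻¹) * (1 / 4 : ℝ) ^ n := by
  have e : ((2:ℝ) ^ (k₀ + (n : ℤ)))⁻¹ = ((2:ℝ) ^ k₀)⁻¹ * ((2:ℝ) ^ n)⁻¹ := by
    rw [zpow_add₀ (two_ne_zero : (2:ℝ) ≠ 0), zpow_natCast, mul_inv]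
  rw [e, ← inv_pow_two_sq n]
  ring

lemma summable_G (F : ℤ → ℝ) (C : ℝ) (k₀ : ℤ)
    (h0 : ∀ k ≤ k₀, F k = 0)
    (hb : ∀ k : ℤ, |F k| ≤ C * (((2:ℝ) ^ k)⁻¹ * ((2:ℝ) ^ k)⁻¹)) :
    Summable F := by
  apply Summable.of_nat_of_neg
  · apply Summable.of_norm_bounded (g := fun n : ℕ => C * ((1 / 4 : ℝ) ^ n))
      (Summable.mul_left C (summable_geometric_of_lt_one (by norm_num) (by norm_num)))
    intro n
    rw [Real.norm_eq_abs]
    calc |F (n : ℤ)| ≤ C * (((2:ℝ) ^ (n : ℤ))⁻¹ * ((2:ℝ) ^ (n : ℤ))⁻¹) := hb n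
      _ = C * (1 / 4 : ℝ) ^ n := by rw [zpow_natCast, inv_pow_two_sq]
  · apply summable_of_ne_finset_zero (s := Finset.range (-k₀).toNat)
    intro n hn
    apply h0
    simp only [Finset.mem_range, not_lt] at hn
    have h1 : ((-k₀).toNat : ℤ) ≤ (n : ℤ) := Int.ofNat_le.2 hn
    have h2 : -k₀ ≤ ((-k₀).toNat : ℤ) := Int.self_le_toNat _
    omega

lemma tsum_telescope (A : ℤ → ℝ) (L CA : ℝ) (k₀ : ℤ)
    (hsum : Summable (fun k : ℤ => A (k - 1) - A k))
    (hconst : ∀ k ≤ k₀, A k = L)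
    (hdec : ∀ k : ℤ, |A k| ≤ CA * (((2:ℝ) ^ k)⁻¹ * ((2:ℝ) ^ k)⁻¹)) :
    ∑' k : ℤ, (A (k - 1) - A k) = L := by
  set F : ℤ → ℝ := fun k => A (k - 1) - A k with hF
  set ι : ℕ → ℤ := fun n => k₀ + 1 + (n : ℤ) with hι
  have hinj : Function.Injective ι := by
    intro a b h
    simp only [hι] at h
    omega
  have hsupp : Function.support F ⊆ Set.range ι := by
    intro k hk
    by_contra hr
    apply hk
    have hkle : k ≤ k₀ := by
      by_contra hgt
      exact hr ⟨(k - k₀ - 1).toNat, by simp only [hι]; omega⟩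
    simp only [hF, hconst k hkle, hconst (k - 1) (by omega), sub_self]
  have key : ∑' k : ℤ, F k = ∑' n : ℕ, F (ι n) := (hinj.tsum_eq hsupp).symm
  have hsum2 : Summable (fun n : ℕ => F (ι n)) := hsum.comp_injective hinj
  have htends := hsum2.hasSum.tendsto_sum_nat
  have heq : ∀ n : ℕ, ∑ i ∈ Finset.range n, F (ι i) = L - A (k₀ + n) := by
    intro n
    have e : ∀ i : ℕ, F (ι i) = A (k₀ + (i : ℤ)) - A (k₀ + ((i + 1 : ℕ) : ℤ)) := by
      intro i
      simp only [hF, hι]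
      congr 2 <;> push_cast <;> ring
    rw [Finset.sum_congr rfl fun i _ => e i,
        Finset.sum_range_sub' (fun i : ℕ => A (k₀ + i)) n]
    norm_num [hconst k₀ le_rfl]
  simp only [heq] at htends
  have h0 : Tendsto (fun n : ℕ => A (k₀ + n)) atTop (nhds 0) := by
    apply squeeze_zero_norm (a := fun n : ℕ => (CA * (((2:ℝ) ^ k₀)⁻¹ * ((2:ℝ) ^ k₀)⁻¹)) * (1 / 4 : ℝ) ^ n)
    · intro n
      rw [Real.norm_eq_abs]
      calc |A (k₀ + n)| ≤ CA * (((2:ℝ) ^ (k₀ + (n : ℤ)))⁻¹ * ((2:ℝ) ^ (k₀ + (n : ℤ)))⁻¹) :=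
            hdec (k₀ + n)
        _ = (CA * (((2:ℝ) ^ k₀)⁻¹ * ((2:ℝ) ^ k₀)⁻¹)) * (1 / 4 : ℝ) ^ n := by
            rw [inv_sq_zpow_add]; ring
    · have := (tendsto_pow_atTop_nhds_zero_of_lt_one (by norm_num : (0:ℝ) ≤ 1/4)
        (by norm_num : (1/4:ℝ) < 1)).const_mul (CA * (((2:ℝ) ^ k₀)⁻¹ * ((2:ℝ) ^ k₀)⁻¹))
      simpa using this
  have hlim : Tendsto (fun n : ℕ => L - A (k₀ + n)) atTop (nhds L) := by
    have := (tendsto_const_nhds (x := L) (f := atTop (α := ℕ))).sub h0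
    simpa using this
  rw [key, tendsto_nhds_unique htends hlim]

end ParaProdAux

/-- For simple functions `f, g` on `ℝ`, the pointwise product decomposes a.e.
as the sum of the three one-parameter dyadic paraproducts
`π^{(0,1)}(f,g) + π^{(1,0)}(f,g) + π^{(1,1)}(f,g)`. -/
theorem product_eq_sum_of_paraproducts (f g : ℝ → ℝ)
    (hf : IsDyadicSimple f) (hg : IsDyadicSimple g) :
    ∀ᵐ x : ℝ ∂volume, f x * g x =
      (∑' p : ℤ × ℤ, (∫ y : ℝ, f y * nind p y) * (∫ y : ℝ, g y * haar p y) * haar p x) +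
      (∑' p : ℤ × ℤ, (∫ y : ℝ, f y * haar p y) * (∫ y : ℝ, g y * nind p y) * haar p x) +
      (∑' p : ℤ × ℤ, (∫ y : ℝ, f y * haar p y) * (∫ y : ℝ, g y * haar p y) * nind p x) := by
  classical
  open ParaProdAux in
  have hfi : Integrable f volume := integrable_simple hf
  have hgi : Integrable g volume := integrable_simple hg
  have hD : ∀ᵐ x : ℝ ∂volume, ∀ p : ℤ × ℤ, x ≠ (p.2 : ℝ) * 2 ^ p.1 := by
    rw [MeasureTheory.ae_iff]
    refine measure_mono_null (fun x hx => ?_)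
      (measure_iUnion_null (s := fun p : ℤ × ℤ => {((p.2 : ℝ) * 2 ^ p.1)})
        fun p => Real.volume_singleton)
    simp only [Set.mem_setOf_eq, not_forall, not_not] at hx
    obtain ⟨p, hp⟩ := hx
    exact Set.mem_iUnion.2 ⟨p, by simp [hp]⟩
  filter_upwards [hD] with x hx
  set ι : ℤ → ℤ × ℤ := fun k => (k, ⌊x / 2 ^ k⌋) with hι
  have hinj : Function.Injective ι := fun a b h => congrArg Prod.fst h
  set T1 : ℤ × ℤ → ℝ :=
    fun p => (∫ y : ℝ, f y * nind p y) * (∫ y : ℝ, g y * haar p y) * haar p x with hT1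
  set T2 : ℤ × ℤ → ℝ :=
    fun p => (∫ y : ℝ, f y * haar p y) * (∫ y : ℝ, g y * nind p y) * haar p x with hT2
  set T3 : ℤ × ℤ → ℝ :=
    fun p => (∫ y : ℝ, f y * haar p y) * (∫ y : ℝ, g y * haar p y) * nind p x with hT3
  have hmem : ∀ p : ℤ × ℤ, x ∈ dyadicI p → p = ι p.1 := by
    rintro ⟨k, n⟩ hp
    simp only [hι]
    exact Prod.ext rfl (floor_eq_of_mem hp)
  have hs1 : Function.support T1 ⊆ Set.range ι := by
    intro p hp
    rcases eq_or_ne (haar p x) 0 with h | h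
    · exact absurd (by simp [hT1, h]) hp
    · exact ⟨p.1, (hmem p (not_imp_comm.1 haar_eq_zero h)).symm⟩
  have hs2 : Function.support T2 ⊆ Set.range ι := by
    intro p hp
    rcases eq_or_ne (haar p x) 0 with h | h
    · exact absurd (by simp [hT2, h]) hp
    · exact ⟨p.1, (hmem p (not_imp_comm.1 haar_eq_zero h)).symm⟩
  have hs3 : Function.support T3 ⊆ Set.range ι := by
    intro p hp
    rcases eq_or_ne (nind p x) 0 with h | h
    · exact absurd (by simp [hT3, h]) hp
    · exact ⟨p.1, (hmem p (not_imp_comm.1 nind_eq_zero h)).symm⟩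
  have e1 : ∑' p : ℤ × ℤ, T1 p = ∑' k : ℤ, T1 (ι k) := (hinj.tsum_eq hs1).symm
  have e2 : ∑' p : ℤ × ℤ, T2 p = ∑' k : ℤ, T2 (ι k) := (hinj.tsum_eq hs2).symm
  have e3 : ∑' p : ℤ × ℤ, T3 p = ∑' k : ℤ, T3 (ι k) := (hinj.tsum_eq hs3).symm
  have hG1 : ∀ k : ℤ, T1 (ι k) = EkD f x k * (EkD g x (k - 1) - EkD g x k) := by
    intro k
    simp only [hT1, hι]
    rw [integral_mul_nind hfi, mul_assoc, delta_eq hgi x k]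
    rfl
  have hG2 : ∀ k : ℤ, T2 (ι k) = (EkD f x (k - 1) - EkD f x k) * EkD g x k := by
    intro k
    simp only [hT2, hι]
    rw [integral_mul_nind hgi, mul_right_comm, delta_eq hfi x k]
    rfl
  have hG3 : ∀ k : ℤ, T3 (ι k)
      = (EkD f x (k - 1) - EkD f x k) * (EkD g x (k - 1) - EkD g x k) := by
    intro k
    simp only [hT3, hι]
    exact term3_eq hfi hgi x k
  -- local constancy
  obtain ⟨kf, hkf⟩ := exists_const x hx hf
  obtain ⟨kg, hkg⟩ := exists_const x hx hg
  set k₀ : ℤ := min kf kg with hk₀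
  have hEf : ∀ k ≤ k₀, EkD f x k = f x :=
    fun k hk => Ek_eq_self (hkf k (hk.trans (min_le_left _ _)))
  have hEg : ∀ k ≤ k₀, EkD g x k = g x :=
    fun k hk => Ek_eq_self (hkg k (hk.trans (min_le_right _ _)))
  -- decay bounds
  set Nf : ℝ := ∫ y, |f y| with hNf
  set Ng : ℝ := ∫ y, |g y| with hNg
  have hNf0 : 0 ≤ Nf := integral_nonneg fun y => abs_nonneg _
  have hNg0 : 0 ≤ Ng := integral_nonneg fun y => abs_nonneg _
  have hbf : ∀ k : ℤ, |EkD f x k| ≤ ((2:ℝ) ^ k)⁻¹ * Nf := fun k => Ek_abs_le hfi x k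
  have hbg : ∀ k : ℤ, |EkD g x k| ≤ ((2:ℝ) ^ k)⁻¹ * Ng := fun k => Ek_abs_le hgi x k
  have hdf : ∀ k : ℤ, |EkD f x (k - 1) - EkD f x k| ≤ 3 * ((2:ℝ) ^ k)⁻¹ * Nf := by
    intro k
    have h1 := hbf (k - 1)
    rw [inv_zpow_sub_one] at h1
    have h2 := hbf k
    have h3 := abs_sub (EkD f x (k - 1)) (EkD f x k)
    linarith
  have hdg : ∀ k : ℤ, |EkD g x (k - 1) - EkD g x k| ≤ 3 * ((2:ℝ) ^ k)⁻¹ * Ng := by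
    intro k
    have h1 := hbg (k - 1)
    rw [inv_zpow_sub_one] at h1
    have h2 := hbg k
    have h3 := abs_sub (EkD g x (k - 1)) (EkD g x k)
    linarith
  have hinv0 : ∀ k : ℤ, (0:ℝ) ≤ ((2:ℝ) ^ k)⁻¹ := fun k => le_of_lt (by positivity)
  have hS1 : Summable (fun k : ℤ => T1 (ι k)) := by
    apply summable_G _ (3 * Nf * Ng) k₀
    · intro k hk
      rw [hG1 k, hEg (k - 1) (by omega), hEg k hk, sub_self, mul_zero]
    · intro k
      rw [hG1 k, abs_mul]
      calc |EkD f x k| * |EkD g x (k - 1) - EkD g x k|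
          ≤ (((2:ℝ) ^ k)⁻¹ * Nf) * (3 * ((2:ℝ) ^ k)⁻¹ * Ng) :=
            mul_le_mul (hbf k) (hdg k) (abs_nonneg _)
              (mul_nonneg (hinv0 k) hNf0)
        _ = 3 * Nf * Ng * (((2:ℝ) ^ k)⁻¹ * ((2:ℝ) ^ k)⁻¹) := by ring
  have hS2 : Summable (fun k : ℤ => T2 (ι k)) := by
    apply summable_G _ (3 * Nf * Ng) k₀
    · intro k hk
      rw [hG2 k, hEf (k - 1) (by omega), hEf k hk, sub_self, zero_mul]
    · intro k
      rw [hG2 k, abs_mul]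
      calc |EkD f x (k - 1) - EkD f x k| * |EkD g x k|
          ≤ (3 * ((2:ℝ) ^ k)⁻¹ * Nf) * (((2:ℝ) ^ k)⁻¹ * Ng) :=
            mul_le_mul (hdf k) (hbg k) (abs_nonneg _)
              (mul_nonneg (mul_nonneg (by norm_num) (hinv0 k)) hNf0)
        _ = 3 * Nf * Ng * (((2:ℝ) ^ k)⁻¹ * ((2:ℝ) ^ k)⁻¹) := by ring
  have hS3 : Summable (fun k : ℤ => T3 (ι k)) := by
    apply summable_G _ (9 * Nf * Ng) k₀
    · intro k hk
      rw [hG3 k, hEf (k - 1) (by omega), hEf k hk, sub_self, zero_mul]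
    · intro k
      rw [hG3 k, abs_mul]
      calc |EkD f x (k - 1) - EkD f x k| * |EkD g x (k - 1) - EkD g x k|
          ≤ (3 * ((2:ℝ) ^ k)⁻¹ * Nf) * (3 * ((2:ℝ) ^ k)⁻¹ * Ng) :=
            mul_le_mul (hdf k) (hdg k) (abs_nonneg _)
              (mul_nonneg (mul_nonneg (by norm_num) (hinv0 k)) hNf0)
        _ = 9 * Nf * Ng * (((2:ℝ) ^ k)⁻¹ * ((2:ℝ) ^ k)⁻¹) := by ring
  -- telescoping
  set A : ℤ → ℝ := fun k => EkD f x k * EkD g x k with hA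
  have hsumeq : (fun k : ℤ => A (k - 1) - A k)
      = fun k : ℤ => T1 (ι k) + T2 (ι k) + T3 (ι k) := by
    funext k
    rw [hG1 k, hG2 k, hG3 k]
    simp only [hA]
    ring
  have hFsum : Summable (fun k : ℤ => A (k - 1) - A k) := by
    rw [hsumeq]
    exact (hS1.add hS2).add hS3
  have hconstA : ∀ k ≤ k₀, A k = f x * g x := by
    intro k hk
    simp only [hA]
    rw [hEf k hk, hEg k hk]
  have hdecA : ∀ k : ℤ, |A k| ≤ Nf * Ng * (((2:ℝ) ^ k)⁻¹ * ((2:ℝ) ^ k)⁻¹) := by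
    intro k
    simp only [hA]
    rw [abs_mul]
    calc |EkD f x k| * |EkD g x k|
        ≤ (((2:ℝ) ^ k)⁻¹ * Nf) * (((2:ℝ) ^ k)⁻¹ * Ng) :=
          mul_le_mul (hbf k) (hbg k) (abs_nonneg _) (mul_nonneg (hinv0 k) hNf0)
      _ = Nf * Ng * (((2:ℝ) ^ k)⁻¹ * ((2:ℝ) ^ k)⁻¹) := by ring
  have final : ∑' k : ℤ, (A (k - 1) - A k) = f x * g x :=
    tsum_telescope A (f x * g x) (Nf * Ng) k₀ hFsum hconstA hdecA
  rw [e1, e2, e3, ← hS1.tsum_add hS2, ← (hS1.add hS2).tsum_add hS3]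
  rw [← final, hsumeq]

end
end

section
/- For 0 < p < ∞ and any simple function g on ℝ², the operator norm of π²_g from the bi-parameter dyadic Hardy space H^p_d(ℝ⊗ℝ) to itself is bounded below by a constant (depending only on p) times ‖g‖_{L^∞(ℝ²)}. (Sharpness of the upper bound ‖π²_g‖ ≲ ‖g‖_∞; it follows by testing on f = h_R and Lebesgue differentiation.) -/
open MeasureTheory Set
open scoped ENNReal Classical

noncomputable section

lemma two_zpow_pos (k : ℤ) : (0:ℝ) < 2 ^ k := zpow_pos (by norm_num) k

lemma mem_dyadicI {x : ℝ} {p : ℤ × ℤ} :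
    x ∈ dyadicI p ↔ (p.2 : ℝ) * 2 ^ p.1 ≤ x ∧ x < (p.2 + 1 : ℝ) * 2 ^ p.1 := Iff.rfl

lemma measurableSet_dyadicI (p : ℤ × ℤ) : MeasurableSet (dyadicI p) := measurableSet_Ico

lemma volume_dyadicI (p : ℤ × ℤ) : volume (dyadicI p) = ENNReal.ofReal ((2:ℝ) ^ p.1) := by
  rw [dyadicI, Real.volume_Ico]
  congr 1; ring

lemma mem_dyadicI_floor (k : ℤ) (x : ℝ) : x ∈ dyadicI (k, ⌊x / 2 ^ k⌋) := by
  have h2 := two_zpow_pos k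
  constructor
  · have := Int.floor_le (x / 2 ^ k)
    rw [le_div_iff₀ h2] at this
    simpa using this
  · have := Int.lt_floor_add_one (x / 2 ^ k)
    rw [div_lt_iff₀ h2] at this
    simpa [add_comm] using this

lemma dyadicI_subset_or_disjoint {p q : ℤ × ℤ} (h : p.1 ≤ q.1) :
    dyadicI p ⊆ dyadicI q ∨ Disjoint (dyadicI p) (dyadicI q) := by
  by_cases hd : Disjoint (dyadicI p) (dyadicI q)
  · exact Or.inr hd
  left
  obtain ⟨x, hxp, hxq⟩ := Set.not_disjoint_iff.1 hd
  set m : ℕ := (q.1 - p.1).toNat with hm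
  have hq1 : q.1 = p.1 + (m : ℤ) := by omega
  have h2q : (2:ℝ) ^ q.1 = ((2:ℤ)^m : ℤ) * (2:ℝ) ^ p.1 := by
    rw [hq1, zpow_add₀ (by norm_num : (2:ℝ) ≠ 0)]
    push_cast
    rw [← Real.rpow_natCast 2 m, ← Real.rpow_intCast 2 (m:ℤ)]
    push_cast
    ring
  have hp2 := two_zpow_pos p.1
  -- integer inequalities
  have h1 : q.2 * 2 ^ m ≤ p.2 := by
    have : (q.2 : ℝ) * 2 ^ q.1 < (p.2 + 1) * 2 ^ p.1 := lt_of_le_of_lt hxq.1 hxp.2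
    rw [h2q] at this
    have : ((q.2 * 2 ^ m : ℤ) : ℝ) < ((p.2 + 1 : ℤ) : ℝ) := by
      push_cast at this ⊢
      nlinarith
    have := Int.cast_lt.mp this
    omega
  have h2 : p.2 + 1 ≤ (q.2 + 1) * 2 ^ m := by
    have : (p.2 : ℝ) * 2 ^ p.1 < (q.2 + 1) * 2 ^ q.1 := lt_of_le_of_lt hxp.1 hxq.2
    rw [h2q] at this
    have : ((p.2 : ℤ) : ℝ) < (((q.2 + 1) * 2 ^ m : ℤ) : ℝ) := by
      push_cast at this ⊢
      nlinarith
    have := Int.cast_lt.mp this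
    omega
  intro y hy
  have hy1 := hy.1
  have hy2 := hy.2
  constructor
  · rw [h2q]
    have : ((q.2 * 2 ^ m : ℤ) : ℝ) ≤ (p.2 : ℝ) := by exact_mod_cast Int.cast_le.mpr h1
    push_cast at this ⊢
    nlinarith
  · rw [h2q]
    have : ((p.2 + 1 : ℤ) : ℝ) ≤ (((q.2 + 1) * 2 ^ m : ℤ) : ℝ) := by exact_mod_cast Int.cast_le.mpr h2
    push_cast at this ⊢
    nlinarith

lemma dyadicI_halves (p : ℤ × ℤ) :
    dyadicI p = dyadicI (p.1 - 1, 2 * p.2) ∪ dyadicI (p.1 - 1, 2 * p.2 + 1) := by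
  have h2 : (2:ℝ) ^ p.1 = 2 * 2 ^ (p.1 - 1) := by
    rw [show p.1 = 1 + (p.1 - 1) by ring, zpow_add₀ (by norm_num : (2:ℝ) ≠ 0)]
    norm_num
  have hpos := two_zpow_pos (p.1 - 1)
  ext x
  simp only [Set.mem_union, mem_dyadicI]
  push_cast
  simp only [h2]
  constructor
  · rintro ⟨ha, hb⟩
    rcases lt_or_ge x ((2 * (p.2:ℝ) + 1) * 2 ^ (p.1 - 1)) with h | h
    · left; constructor <;> linarith
    · right; constructor <;> linarith
  · rintro (⟨ha, hb⟩ | ⟨ha, hb⟩) <;> constructor <;> linarith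

lemma disjoint_halves (p : ℤ × ℤ) :
    Disjoint (dyadicI (p.1 - 1, 2 * p.2)) (dyadicI (p.1 - 1, 2 * p.2 + 1)) := by
  rw [Set.disjoint_left]
  rintro x ⟨ha, hb⟩ ⟨hc, hd⟩
  push_cast at *
  linarith

lemma left_subset (p : ℤ × ℤ) : dyadicI (p.1 - 1, 2 * p.2) ⊆ dyadicI p := by
  rw [dyadicI_halves p]; exact Set.subset_union_left

lemma right_subset (p : ℤ × ℤ) : dyadicI (p.1 - 1, 2 * p.2 + 1) ⊆ dyadicI p := by
  rw [dyadicI_halves p]; exact Set.subset_union_right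

lemma haar_eq_zero_of_not_mem {x : ℝ} {p : ℤ × ℤ} (h : x ∉ dyadicI p) : haar p x = 0 := by
  have h1 : x ∉ dyadicI (p.1 - 1, 2 * p.2) := fun hx => h (left_subset p hx)
  have h2 : x ∉ dyadicI (p.1 - 1, 2 * p.2 + 1) := fun hx => h (right_subset p hx)
  simp [haar, Set.indicator_of_notMem, h1, h2]

lemma haar_on_left {x : ℝ} {p : ℤ × ℤ} (h : x ∈ dyadicI (p.1 - 1, 2 * p.2)) :
    haar p x = (2:ℝ) ^ (-(p.1:ℝ)/2) := by
  have h2 : x ∉ dyadicI (p.1 - 1, 2 * p.2 + 1) :=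
    Set.disjoint_left.1 (disjoint_halves p) h
  simp [haar, Set.indicator_of_mem h, Set.indicator_of_notMem h2]

lemma haar_on_right {x : ℝ} {p : ℤ × ℤ} (h : x ∈ dyadicI (p.1 - 1, 2 * p.2 + 1)) :
    haar p x = -((2:ℝ) ^ (-(p.1:ℝ)/2)) := by
  have h2 : x ∉ dyadicI (p.1 - 1, 2 * p.2) :=
    (Set.disjoint_right.1 (disjoint_halves p)) h
  simp [haar, Set.indicator_of_mem h, Set.indicator_of_notMem h2]

lemma integrable_ind (p : ℤ × ℤ) :
    Integrable (fun x => (dyadicI p).indicator (1 : ℝ → ℝ) x) volume := by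
  rw [integrable_indicator_iff (measurableSet_dyadicI p)]
  exact integrableOn_const (by rw [volume_dyadicI]; exact ENNReal.ofReal_ne_top)

lemma integrable_haar (p : ℤ × ℤ) : Integrable (haar p) volume := by
  unfold haar
  exact (((integrable_ind _).sub (integrable_ind _)).const_mul _)

lemma integral_ind (p : ℤ × ℤ) :
    ∫ x, (dyadicI p).indicator (1 : ℝ → ℝ) x = (2:ℝ) ^ p.1 := by
  rw [show (fun x => (dyadicI p).indicator (1 : ℝ → ℝ) x) = (dyadicI p).indicator (fun _ => (1:ℝ)) by rfl]
  rw [MeasureTheory.integral_indicator_const (1:ℝ) (measurableSet_dyadicI p), measureReal_def, volume_dyadicI]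
  rw [ENNReal.toReal_ofReal (le_of_lt (two_zpow_pos p.1))]
  simp

lemma integral_haar (p : ℤ × ℤ) : ∫ x, haar p x = 0 := by
  unfold haar
  rw [MeasureTheory.integral_const_mul, integral_sub (integrable_ind _) (integrable_ind _),
    integral_ind, integral_ind]
  simp

lemma setIntegral_const_on {f : ℝ → ℝ} {q : ℤ × ℤ} {c : ℝ} (h : ∀ x ∈ dyadicI q, f x = c) :
    ∫ x in dyadicI q, f x = 2 ^ q.1 * c := by
  rw [MeasureTheory.setIntegral_congr_fun (measurableSet_dyadicI q) h,
    MeasureTheory.setIntegral_const, measureReal_def, volume_dyadicI,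
    ENNReal.toReal_ofReal (le_of_lt (two_zpow_pos q.1))]
  simp

lemma avgI_const_on {f : ℝ → ℝ} {q : ℤ × ℤ} {c : ℝ} (h : ∀ x ∈ dyadicI q, f x = c) :
    avgI f q = c := by
  rw [avgI, setIntegral_const_on h, dlen]
  field_simp

lemma haar_const_on {p q : ℤ × ℤ} (h : q.1 < p.1) :
    (∀ x ∈ dyadicI q, haar p x = 0) ∨
    (dyadicI q ⊆ dyadicI p ∧ ∃ c, |c| = (2:ℝ) ^ (-(p.1:ℝ)/2) ∧ ∀ x ∈ dyadicI q, haar p x = c) := by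
  have hpos : (0:ℝ) < (2:ℝ) ^ (-(p.1:ℝ)/2) := Real.rpow_pos_of_pos (by norm_num) _
  rcases dyadicI_subset_or_disjoint (le_of_lt h) with hsub | hdis
  · right
    refine ⟨hsub, ?_⟩
    have h' : q.1 ≤ (p.1 - 1, 2 * p.2).1 := by simp; omega
    rcases dyadicI_subset_or_disjoint h' with hL | hLd
    · exact ⟨(2:ℝ) ^ (-(p.1:ℝ)/2), abs_of_pos hpos, fun x hx => haar_on_left (hL hx)⟩
    · refine ⟨-((2:ℝ) ^ (-(p.1:ℝ)/2)), by rw [abs_neg, abs_of_pos hpos], fun x hx => ?_⟩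
      have hxp := hsub hx
      rw [dyadicI_halves p] at hxp
      rcases hxp with hxl | hxr
      · exact absurd hxl (Set.disjoint_left.1 hLd hx)
      · exact haar_on_right hxr
  · left
    exact fun x hx => haar_eq_zero_of_not_mem (Set.disjoint_left.1 hdis hx)

lemma avgI_haar_eq_zero_of_le {p q : ℤ × ℤ} (h : p.1 ≤ q.1) : avgI (haar p) q = 0 := by
  rcases dyadicI_subset_or_disjoint h with hsub | hdis
  · rw [avgI, MeasureTheory.setIntegral_eq_integral_of_forall_compl_eq_zero
      (fun x hx => haar_eq_zero_of_not_mem (fun hxp => hx (hsub hxp))), integral_haar]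
    simp
  · have := avgI_const_on (f := haar p) (q := q) (c := 0)
      (fun x hx => haar_eq_zero_of_not_mem (Set.disjoint_right.1 hdis hx))
    simpa using this

lemma avgI_haar_cases (p q : ℤ × ℤ) :
    avgI (haar p) q = 0 ∨
    (dyadicI q ⊆ dyadicI p ∧ |avgI (haar p) q| = (2:ℝ) ^ (-(p.1:ℝ)/2)) := by
  rcases le_or_gt p.1 q.1 with h | h
  · exact Or.inl (avgI_haar_eq_zero_of_le h)
  rcases haar_const_on h with h0 | ⟨hsub, c, hc, hcon⟩
  · exact Or.inl (by simpa using avgI_const_on h0)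
  · exact Or.inr ⟨hsub, by rw [avgI_const_on hcon, hc]⟩

lemma avgI_haar_bound (p q : ℤ × ℤ) : |avgI (haar p) q| ≤ (2:ℝ) ^ (-(p.1:ℝ)/2) := by
  rcases avgI_haar_cases p q with h | ⟨_, h⟩
  · rw [h]; simp; positivity
  · rw [h]

lemma avgI_haar_eq_zero_of_not_mem {x : ℝ} {p q : ℤ × ℤ} (hq : x ∈ dyadicI q)
    (hp : x ∉ dyadicI p) : avgI (haar p) q = 0 := by
  rcases avgI_haar_cases p q with h | ⟨hsub, _⟩
  · exact h
  · exact absurd (hsub hq) hp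

lemma exists_avgI_haar_attain {x : ℝ} {p : ℤ × ℤ} (hx : x ∈ dyadicI p) :
    ∃ q, x ∈ dyadicI q ∧ |avgI (haar p) q| = (2:ℝ) ^ (-(p.1:ℝ)/2) := by
  have hpos : (0:ℝ) < (2:ℝ) ^ (-(p.1:ℝ)/2) := Real.rpow_pos_of_pos (by norm_num) _
  rw [dyadicI_halves p] at hx
  rcases hx with hx | hx
  · exact ⟨_, hx, by rw [avgI_const_on (fun y hy => haar_on_left hy), abs_of_pos hpos]⟩
  · exact ⟨_, hx, by rw [avgI_const_on (fun y hy => haar_on_right hy), abs_neg, abs_of_pos hpos]⟩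

lemma zpow_half_sq (k : ℤ) : (2:ℝ) ^ (-(k:ℝ)/2) * (2:ℝ) ^ (-(k:ℝ)/2) = ((2:ℝ) ^ k)⁻¹ := by
  rw [← Real.rpow_add (by norm_num : (0:ℝ) < 2)]
  have : -(k:ℝ)/2 + -(k:ℝ)/2 = ((-k : ℤ) : ℝ) := by push_cast; ring
  rw [this, Real.rpow_intCast]
  rw [zpow_neg]

lemma integral_haar_mul_self (p : ℤ × ℤ) : ∫ x, haar p x * haar p x = 1 := by
  have key : ∀ x, haar p x * haar p x =
      ((2:ℝ) ^ (-(p.1:ℝ)/2) * (2:ℝ) ^ (-(p.1:ℝ)/2)) *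
        ((dyadicI (p.1 - 1, 2 * p.2)).indicator 1 x +
          (dyadicI (p.1 - 1, 2 * p.2 + 1)).indicator 1 x) := by
    intro x
    by_cases hL : x ∈ dyadicI (p.1 - 1, 2 * p.2)
    · have hR : x ∉ dyadicI (p.1 - 1, 2 * p.2 + 1) := Set.disjoint_left.1 (disjoint_halves p) hL
      rw [haar_on_left hL, Set.indicator_of_mem hL, Set.indicator_of_notMem hR]
      simp
    by_cases hR : x ∈ dyadicI (p.1 - 1, 2 * p.2 + 1)
    · rw [haar_on_right hR, Set.indicator_of_mem hR, Set.indicator_of_notMem hL]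
      simp
    · have h0 : haar p x = 0 := by
        apply haar_eq_zero_of_not_mem
        rw [dyadicI_halves p]
        rintro (h | h) <;> [exact hL h; exact hR h]
      rw [h0, Set.indicator_of_notMem hL, Set.indicator_of_notMem hR]
      simp
  simp_rw [key]
  rw [MeasureTheory.integral_const_mul, integral_add (integrable_ind _) (integrable_ind _),
    integral_ind, integral_ind, zpow_half_sq]
  have h2 : (2:ℝ) ^ ((p.1 - 1, 2 * p.2).1) + (2:ℝ) ^ ((p.1 - 1, 2 * p.2 + 1).1) = 2 ^ p.1 := by
    simp only
    rw [show p.1 = 1 + (p.1 - 1) by ring, zpow_add₀ (by norm_num : (2:ℝ) ≠ 0)]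
    norm_num; ring
  rw [h2]
  exact inv_mul_cancel₀ (ne_of_gt (two_zpow_pos p.1))

lemma dyadicI_disjoint_same_scale {p q : ℤ × ℤ} (h : p.1 = q.1) (hn : p.2 ≠ q.2) :
    Disjoint (dyadicI p) (dyadicI q) := by
  have hpos := two_zpow_pos p.1
  rw [Set.disjoint_left]
  rintro x ⟨ha, hb⟩ ⟨hc, hd⟩
  rw [← h] at hc hd
  rcases lt_or_gt_of_ne hn with hlt | hlt
  · have : (p.2 : ℝ) + 1 ≤ q.2 := by exact_mod_cast hlt
    nlinarith
  · have : (q.2 : ℝ) + 1 ≤ p.2 := by exact_mod_cast hlt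
    nlinarith

lemma integral_haar_mul_of_lt {p q : ℤ × ℤ} (h : q.1 < p.1) :
    ∫ x, haar p x * haar q x = 0 := by
  rcases haar_const_on h with h0 | ⟨_, c, _, hcon⟩
  · have key : ∀ x, haar p x * haar q x = 0 := by
      intro x
      by_cases hx : x ∈ dyadicI q
      · rw [h0 x hx, zero_mul]
      · rw [haar_eq_zero_of_not_mem hx, mul_zero]
    simp_rw [key, integral_zero]
  · have key : ∀ x, haar p x * haar q x = c * haar q x := by
      intro x
      by_cases hx : x ∈ dyadicI q
      · rw [hcon x hx]
      · rw [haar_eq_zero_of_not_mem hx, mul_zero, mul_zero]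
    simp_rw [key]
    rw [MeasureTheory.integral_const_mul, integral_haar, mul_zero]

lemma integral_haar_mul (p q : ℤ × ℤ) :
    ∫ x, haar p x * haar q x = if p = q then 1 else 0 := by
  split_ifs with heq
  · rw [heq]; exact integral_haar_mul_self q
  rcases lt_trichotomy q.1 p.1 with h | h | h
  · exact integral_haar_mul_of_lt h
  · have hn : p.2 ≠ q.2 := fun h2 => heq (Prod.ext h.symm h2)
    have hd := dyadicI_disjoint_same_scale h.symm hn
    have key : ∀ x, haar p x * haar q x = 0 := by
      intro x
      by_cases hx : x ∈ dyadicI p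
      · rw [haar_eq_zero_of_not_mem (Set.disjoint_left.1 hd hx), mul_zero]
      · rw [haar_eq_zero_of_not_mem hx, zero_mul]
    simp_rw [key, integral_zero]
  · simp_rw [mul_comm (haar p _) (haar q _)]
    exact integral_haar_mul_of_lt h

lemma measurableSet_dyadicR (r : RectIx) : MeasurableSet (dyadicR r) :=
  (measurableSet_dyadicI r.1).prod (measurableSet_dyadicI r.2)

lemma mem_dyadicR {z : ℝ × ℝ} {r : RectIx} :
    z ∈ dyadicR r ↔ z.1 ∈ dyadicI r.1 ∧ z.2 ∈ dyadicI r.2 := Set.mem_prod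

lemma volume_dyadicR (r : RectIx) :
    volume (dyadicR r) = ENNReal.ofReal ((2:ℝ) ^ r.1.1) * ENNReal.ofReal ((2:ℝ) ^ r.2.1) := by
  rw [dyadicR, MeasureTheory.Measure.volume_eq_prod, MeasureTheory.Measure.prod_prod,
    volume_dyadicI, volume_dyadicI]

instance rect_nonempty (z : ℝ × ℝ) : Nonempty {r : RectIx // z ∈ dyadicR r} :=
  ⟨⟨((0, ⌊z.1 / 2 ^ (0:ℤ)⌋), (0, ⌊z.2 / 2 ^ (0:ℤ)⌋)),
    mem_dyadicR.2 ⟨mem_dyadicI_floor 0 z.1, mem_dyadicI_floor 0 z.2⟩⟩⟩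

lemma avgR_mul_const (a : ℝ) (f : ℝ × ℝ → ℝ) (r : RectIx) :
    avgR (fun z => a * f z) r = a * avgR f r := by
  rw [avgR, avgR, MeasureTheory.integral_const_mul]
  ring

lemma avgR_haarR (r r' : RectIx) :
    avgR (haarR r) r' = avgI (haar r.1) r'.1 * avgI (haar r.2) r'.2 := by
  rw [avgR, avgI, avgI, rlen, dyadicR]
  have : ∫ z in (dyadicI r'.1) ×ˢ (dyadicI r'.2), haarR r z =
      (∫ x in dyadicI r'.1, haar r.1 x) * ∫ y in dyadicI r'.2, haar r.2 y := by
    rw [show (volume : Measure (ℝ × ℝ)) = (volume : Measure ℝ).prod volume from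
      MeasureTheory.Measure.volume_eq_prod ℝ ℝ]
    exact MeasureTheory.setIntegral_prod_mul (haar r.1) (haar r.2) _ _
  rw [this, mul_inv]
  ring

lemma haarCoefR_haarR (r₀ r : RectIx) :
    haarCoefR (haarR r₀) r = if r = r₀ then 1 else 0 := by
  rw [haarCoefR]
  have key : ∀ z : ℝ × ℝ, haarR r₀ z * haarR r z =
      (haar r₀.1 z.1 * haar r.1 z.1) * (haar r₀.2 z.2 * haar r.2 z.2) := by
    intro z; rw [haarR, haarR]; ring
  simp_rw [key]
  rw [show (volume : Measure (ℝ × ℝ)) = (volume : Measure ℝ).prod volume from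
    MeasureTheory.Measure.volume_eq_prod ℝ ℝ]
  rw [MeasureTheory.integral_prod_mul (fun x => haar r₀.1 x * haar r.1 x)
    (fun y => haar r₀.2 y * haar r.2 y)]
  rw [integral_haar_mul, integral_haar_mul]
  rcases eq_or_ne r r₀ with h | h
  · simp [h]
  · rw [if_neg h]
    have h' : r₀.1 ≠ r.1 ∨ r₀.2 ≠ r.2 := by
      by_contra hc
      push_neg at hc
      exact h (Prod.ext hc.1.symm hc.2.symm)
    rcases h' with h1 | h1
    · rw [if_neg h1, zero_mul]
    · rw [if_neg h1, mul_zero]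

def haarBnd (r : RectIx) : ℝ := (2:ℝ) ^ (-(r.1.1:ℝ)/2) * (2:ℝ) ^ (-(r.2.1:ℝ)/2)

lemma haarBnd_pos (r : RectIx) : 0 < haarBnd r :=
  mul_pos (Real.rpow_pos_of_pos (by norm_num) _) (Real.rpow_pos_of_pos (by norm_num) _)

lemma strongMax_smul_haarR (a : ℝ) (r : RectIx) (z : ℝ × ℝ) :
    strongMax (fun w => a * haarR r w) z =
      (dyadicR r).indicator (fun _ => |a| * haarBnd r) z := by
  have habs : ∀ r' : RectIx, |avgR (fun w => a * haarR r w) r'| =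
      |a| * (|avgI (haar r.1) r'.1| * |avgI (haar r.2) r'.2|) := by
    intro r'
    rw [avgR_mul_const, avgR_haarR, abs_mul, abs_mul]
  have hb : ∀ r' : {r' : RectIx // z ∈ dyadicR r'},
      |avgR (fun w => a * haarR r w) r'.1| ≤ |a| * haarBnd r := by
    intro r'
    rw [habs, haarBnd]
    have h1 := avgI_haar_bound r.1 r'.1.1
    have h2 := avgI_haar_bound r.2 r'.1.2
    gcongr <;> first | exact abs_nonneg _ | positivity
  by_cases hz : z ∈ dyadicR r
  · rw [Set.indicator_of_mem hz]
    apply le_antisymm (ciSup_le hb)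
    obtain ⟨q1, hq1m, hq1⟩ := exists_avgI_haar_attain (mem_dyadicR.1 hz).1
    obtain ⟨q2, hq2m, hq2⟩ := exists_avgI_haar_attain (mem_dyadicR.1 hz).2
    have hmem : z ∈ dyadicR (q1, q2) := mem_dyadicR.2 ⟨hq1m, hq2m⟩
    have hbdd : BddAbove (Set.range fun r' : {r' : RectIx // z ∈ dyadicR r'} =>
        |avgR (fun w => a * haarR r w) r'.1|) := by
      refine ⟨|a| * haarBnd r, ?_⟩
      rintro _ ⟨r', rfl⟩
      exact hb r'
    have := le_ciSup hbdd (⟨(q1, q2), hmem⟩ : {r' : RectIx // z ∈ dyadicR r'})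
    rw [habs] at this
    simpa [hq1, hq2, haarBnd] using this
  · rw [Set.indicator_of_notMem hz]
    have h0 : ∀ r' : {r' : RectIx // z ∈ dyadicR r'},
        |avgR (fun w => a * haarR r w) r'.1| = 0 := by
      intro r'
      rw [habs]
      have hzm := mem_dyadicR.1 r'.2
      have : z.1 ∉ dyadicI r.1 ∨ z.2 ∉ dyadicI r.2 := by
        by_contra hc
        push_neg at hc
        exact hz (mem_dyadicR.2 hc)
      rcases this with hn | hn
      · rw [avgI_haar_eq_zero_of_not_mem hzm.1 hn]
        simp
      · rw [avgI_haar_eq_zero_of_not_mem hzm.2 hn]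
        simp
    calc strongMax (fun w => a * haarR r w) z
        = ⨆ _ : {r' : RectIx // z ∈ dyadicR r'}, (0:ℝ) := iSup_congr h0
      _ = 0 := ciSup_const

lemma hpNorm_smul_haarR {p : ℝ} (hp : 0 < p) (a : ℝ) (r : RectIx) :
    hpNorm p (fun z => a * haarR r z) =
      ENNReal.ofReal (|a| * haarBnd r) * (volume (dyadicR r)) ^ (1/p) := by
  have hfun : strongMax (fun z => a * haarR r z) =
      (dyadicR r).indicator (fun _ => |a| * haarBnd r) := funext (strongMax_smul_haarR a r)
  rw [hpNorm, hfun, eLpNorm_indicator_const (measurableSet_dyadicR r)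
    (ENNReal.ofReal_pos.2 hp).ne' ENNReal.ofReal_ne_top,
    ENNReal.toReal_ofReal hp.le,
    Real.enorm_eq_ofReal (mul_nonneg (abs_nonneg a) (haarBnd_pos r).le)]

lemma pi2_haarR (g : ℝ × ℝ → ℝ) (r₀ : RectIx) :
    pi2 g (haarR r₀) = fun z => avgR g r₀ * haarR r₀ z := by
  funext z
  rw [pi2]
  rw [tsum_eq_single r₀ (fun r hr => by rw [haarCoefR_haarR, if_neg hr, zero_mul, zero_mul])]
  rw [haarCoefR_haarR, if_pos rfl, one_mul]

lemma finHaar2_haarR (r : RectIx) : FinHaar2 (haarR r) := by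
  refine ⟨{r}, fun _ => 1, ?_⟩
  funext z
  simp

lemma vol_pow_pos {p : ℝ} (hp : 0 < p) (r : RectIx) :
    (volume (dyadicR r)) ^ (1/p) ≠ 0 ∧ (volume (dyadicR r)) ^ (1/p) ≠ ∞ := by
  have h1 : volume (dyadicR r) ≠ 0 := by
    rw [volume_dyadicR]
    exact mul_ne_zero (by simp [two_zpow_pos]) (by simp [two_zpow_pos])
  have h2 : volume (dyadicR r) ≠ ∞ := by
    rw [volume_dyadicR]
    exact ENNReal.mul_ne_top ENNReal.ofReal_ne_top ENNReal.ofReal_ne_top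
  constructor
  · simp [ENNReal.rpow_eq_zero_iff, h1, h2]
  · simp [ENNReal.rpow_eq_top_iff, h1, h2]

lemma ofReal_avg_le {p : ℝ} (hp : 0 < p) {g : ℝ × ℝ → ℝ} {C : ℝ≥0∞} (r : RectIx)
    (hC : hpNorm p (pi2 g (haarR r)) ≤ C * hpNorm p (haarR r)) :
    ENNReal.ofReal |avgR g r| ≤ C := by
  rw [pi2_haarR, hpNorm_smul_haarR hp] at hC
  have h1 : hpNorm p (haarR r) = ENNReal.ofReal (|(1:ℝ)| * haarBnd r) * (volume (dyadicR r)) ^ (1/p) := by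
    rw [← hpNorm_smul_haarR hp 1 r]
    congr 1
    funext z
    rw [one_mul]
  rw [h1] at hC
  have hB := haarBnd_pos r
  rw [ENNReal.ofReal_mul (abs_nonneg _), ENNReal.ofReal_mul (abs_nonneg _)] at hC
  simp only [abs_one, ENNReal.ofReal_one, one_mul] at hC
  obtain ⟨hv0, hvt⟩ := vol_pow_pos hp r
  have hN0 : ENNReal.ofReal (haarBnd r) * (volume (dyadicR r)) ^ (1/p) ≠ 0 :=
    mul_ne_zero (by simp [ENNReal.ofReal_eq_zero]; linarith) hv0
  have hNt : ENNReal.ofReal (haarBnd r) * (volume (dyadicR r)) ^ (1/p) ≠ ∞ :=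
    ENNReal.mul_ne_top ENNReal.ofReal_ne_top hvt
  rw [mul_assoc] at hC
  exact (ENNReal.mul_le_mul_iff_left hN0 hNt).1 hC

lemma rlen_pos (r : RectIx) : 0 < rlen r := mul_pos (two_zpow_pos _) (two_zpow_pos _)

lemma volume_dyadicR_toReal (r : RectIx) : (volume (dyadicR r)).toReal = rlen r := by
  rw [volume_dyadicR, ENNReal.toReal_mul, ENNReal.toReal_ofReal (two_zpow_pos _).le,
    ENNReal.toReal_ofReal (two_zpow_pos _).le]
  rfl

lemma avgR_const_on {g : ℝ × ℝ → ℝ} {r : RectIx} {c : ℝ} (h : ∀ w ∈ dyadicR r, g w = c) :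
    avgR g r = c := by
  rw [avgR, MeasureTheory.setIntegral_congr_fun (measurableSet_dyadicR r) h,
    MeasureTheory.setIntegral_const, smul_eq_mul, measureReal_def, volume_dyadicR_toReal, ← mul_assoc,
    inv_mul_cancel₀ (rlen_pos r).ne', one_mul]

lemma mem_dyadicI_iff_of_small {x w : ℝ} {q p : ℤ × ℤ} (h : q.1 ≤ p.1)
    (hx : x ∈ dyadicI q) (hw : w ∈ dyadicI q) : (w ∈ dyadicI p ↔ x ∈ dyadicI p) := by
  rcases dyadicI_subset_or_disjoint h with hsub | hdis
  · exact iff_of_true (hsub hw) (hsub hx)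
  · exact iff_of_false (Set.disjoint_left.1 hdis hw) (Set.disjoint_left.1 hdis hx)

lemma exists_small_rect {g : ℝ × ℝ → ℝ} (hg : IsDyadicSimple2 g) (z : ℝ × ℝ) :
    ∃ r : RectIx, avgR g r = g z := by
  obtain ⟨s, c, rfl⟩ := hg
  set t : Finset ℤ := insert (0:ℤ) (s.image fun r => min r.1.1 r.2.1) with ht
  have htne : t.Nonempty := ⟨0, Finset.mem_insert_self _ _⟩
  set K : ℤ := t.min' htne with hKdef
  have hK : ∀ r ∈ s, K ≤ r.1.1 ∧ K ≤ r.2.1 := by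
    intro r hr
    have : K ≤ min r.1.1 r.2.1 :=
      Finset.min'_le t _ (Finset.mem_insert_of_mem (Finset.mem_image_of_mem _ hr))
    omega
  set rz : RectIx := ((K, ⌊z.1 / 2 ^ K⌋), (K, ⌊z.2 / 2 ^ K⌋)) with hrz
  have hzm : z ∈ dyadicR rz := mem_dyadicR.2 ⟨mem_dyadicI_floor K z.1, mem_dyadicI_floor K z.2⟩
  refine ⟨rz, avgR_const_on fun w hw => ?_⟩
  apply Finset.sum_congr rfl
  intro r hr
  congr 1
  have hw1 := (mem_dyadicR.1 hw).1
  have hw2 := (mem_dyadicR.1 hw).2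
  have hz1 := (mem_dyadicR.1 hzm).1
  have hz2 := (mem_dyadicR.1 hzm).2
  have hiff : w ∈ dyadicR r ↔ z ∈ dyadicR r := by
    rw [mem_dyadicR, mem_dyadicR,
      mem_dyadicI_iff_of_small (hK r hr).1 hz1 hw1,
      mem_dyadicI_iff_of_small (hK r hr).2 hz2 hw2]
  by_cases hzr : z ∈ dyadicR r
  · rw [Set.indicator_of_mem (hiff.2 hzr), Set.indicator_of_mem hzr]
    rfl
  · rw [Set.indicator_of_notMem (fun hwr => hzr (hiff.1 hwr)),
      Set.indicator_of_notMem hzr]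

/-- For `0 < p < ∞`, the `H^p_d(ℝ⊗ℝ) → H^p_d(ℝ⊗ℝ)` operator norm of `π²_g`
is bounded below by `c(p) · ‖g‖_{L^∞}`. -/
theorem pi2_opNorm_lower_bound (p : ℝ) (hp : 0 < p) :
    ∃ c : ℝ, 0 < c ∧ ∀ g : ℝ × ℝ → ℝ, IsDyadicSimple2 g → ∀ C : ℝ≥0∞,
      (∀ f : ℝ × ℝ → ℝ, FinHaar2 f → hpNorm p (pi2 g f) ≤ C * hpNorm p f) →
      ENNReal.ofReal c * eLpNorm g ⊤ volume ≤ C := by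
  refine ⟨1, one_pos, ?_⟩
  intro g hg C hC
  rw [ENNReal.ofReal_one, one_mul]
  have key : ∀ r : RectIx, ENNReal.ofReal |avgR g r| ≤ C :=
    fun r => ofReal_avg_le hp r (hC (haarR r) (finHaar2_haarR r))
  have bound : ∀ z : ℝ × ℝ, ENNReal.ofReal |g z| ≤ C := by
    intro z
    obtain ⟨r, hr⟩ := exists_small_rect hg z
    rw [← hr]
    exact key r
  rcases eq_or_ne C ⊤ with hCt | hCt
  · rw [hCt]; exact le_top
  have bound' : ∀ z : ℝ × ℝ, ‖g z‖ ≤ C.toReal := by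
    intro z
    rw [Real.norm_eq_abs]
    exact (ENNReal.ofReal_le_iff_le_toReal hCt).1 (bound z)
  calc eLpNorm g ⊤ volume = eLpNormEssSup g volume := eLpNorm_exponent_top
    _ ≤ ENNReal.ofReal C.toReal :=
        eLpNormEssSup_le_of_ae_bound (Filter.Eventually.of_forall bound')
    _ = C := ENNReal.ofReal_toReal hCt

end
end

section
/- Let 𝒞 be a finite η-sparse family of dyadic rectangles in ℝ², all contained in an open set Ω. Then for every 1 ≤ p < ∞, ‖Σ_{R∈𝒞} χ_R‖_{L^p(ℝ²)} ≤ C(p,η) |Ω|^{1/p}. (John–Nirenberg lemma for sparse rectangle families.) -/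
open MeasureTheory Set
open scoped ENNReal Classical

noncomputable section

namespace JNAux

lemma measurableSet_dyadicI (p : ℤ × ℤ) : MeasurableSet (dyadicI p) := measurableSet_Ico

lemma dlen_pos (p : ℤ × ℤ) : 0 < dlen p := zpow_pos (by norm_num) _

lemma volume_dyadicI (p : ℤ × ℤ) : volume (dyadicI p) = ENNReal.ofReal (dlen p) := by
  rw [dyadicI, Real.volume_Ico]
  congr 1
  unfold dlen
  ring

lemma vI_ne_zero (p : ℤ × ℤ) : volume (dyadicI p) ≠ 0 := by
  rw [volume_dyadicI]
  exact (ENNReal.ofReal_pos.2 (dlen_pos p)).ne'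

lemma vI_ne_top (p : ℤ × ℤ) : volume (dyadicI p) ≠ ⊤ := by
  rw [volume_dyadicI]; exact ENNReal.ofReal_ne_top

lemma dyadicI_nested {p q : ℤ × ℤ} (hk : p.1 ≤ q.1) {x : ℝ}
    (hxp : x ∈ dyadicI p) (hxq : x ∈ dyadicI q) : dyadicI p ⊆ dyadicI q := by
  obtain ⟨k, n⟩ := p; obtain ⟨k', m⟩ := q
  simp only [dyadicI, mem_Ico] at *
  obtain ⟨h1, h2⟩ := hxp
  obtain ⟨h3, h4⟩ := hxq
  set d : ℕ := (k' - k).toNat with hd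
  have h2pos : (0:ℝ) < 2 ^ k := zpow_pos (by norm_num) _
  have hkk : (2:ℝ) ^ k' = 2 ^ d * 2 ^ k := by
    rw [← zpow_natCast (2:ℝ) d, ← zpow_add₀ (by norm_num : (2:ℝ) ≠ 0)]
    congr 1; omega
  have key1 : (m * 2 ^ d : ℤ) ≤ n := by
    have hlt : ((m * 2 ^ d : ℤ) : ℝ) * 2 ^ k < ((n + 1 : ℤ) : ℝ) * 2 ^ k := by
      push_cast
      calc (m:ℝ) * 2 ^ d * 2 ^ k = m * 2 ^ k' := by rw [hkk]; ring
        _ ≤ x := h3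
        _ < ((n:ℝ) + 1) * 2 ^ k := h2
    have := lt_of_mul_lt_mul_right hlt h2pos.le
    have h5 : (m * 2 ^ d : ℤ) < n + 1 := by exact_mod_cast this
    omega
  have key2 : (n : ℤ) + 1 ≤ (m + 1) * 2 ^ d := by
    have hlt : ((n : ℤ) : ℝ) * 2 ^ k < (((m + 1) * 2 ^ d : ℤ) : ℝ) * 2 ^ k := by
      push_cast
      calc (n:ℝ) * 2 ^ k ≤ x := h1
        _ < ((m:ℝ) + 1) * 2 ^ k' := h4
        _ = ((m:ℝ) + 1) * 2 ^ d * 2 ^ k := by rw [hkk]; ring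
    have := lt_of_mul_lt_mul_right hlt h2pos.le
    have h5 : (n : ℤ) < (m + 1) * 2 ^ d := by exact_mod_cast this
    omega
  intro y hy
  simp only [mem_Ico] at hy ⊢
  obtain ⟨hy1, hy2⟩ := hy
  constructor
  · calc (m:ℝ) * 2 ^ k' = ((m * 2 ^ d : ℤ) : ℝ) * 2 ^ k := by push_cast; rw [hkk]; ring
      _ ≤ (n:ℝ) * 2 ^ k := by
          have : ((m * 2 ^ d : ℤ) : ℝ) ≤ (n:ℝ) := by exact_mod_cast key1
          exact mul_le_mul_of_nonneg_right this h2pos.le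
      _ ≤ y := hy1
  · calc y < ((n:ℝ) + 1) * 2 ^ k := hy2
      _ ≤ (((m + 1) * 2 ^ d : ℤ) : ℝ) * 2 ^ k := by
          have : ((n:ℝ) + 1) ≤ (((m + 1) * 2 ^ d : ℤ) : ℝ) := by exact_mod_cast key2
          exact mul_le_mul_of_nonneg_right this h2pos.le
      _ = ((m:ℝ) + 1) * 2 ^ k' := by push_cast; rw [hkk]; ring

lemma dyadicI_same_scale {k n m : ℤ} {x : ℝ}
    (hx : x ∈ dyadicI (k, n)) (hy : x ∈ dyadicI (k, m)) : n = m := by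
  simp only [dyadicI, mem_Ico] at hx hy
  have h2pos : (0:ℝ) < 2 ^ k := zpow_pos (by norm_num) _
  have h1 : (n:ℝ) * 2 ^ k < ((m:ℝ) + 1) * 2 ^ k := lt_of_le_of_lt hx.1 hy.2
  have h2 : (m:ℝ) * 2 ^ k < ((n:ℝ) + 1) * 2 ^ k := lt_of_le_of_lt hy.1 hx.2
  have h1' : (n:ℝ) < (m:ℝ) + 1 := lt_of_mul_lt_mul_right h1 h2pos.le
  have h2' : (m:ℝ) < (n:ℝ) + 1 := lt_of_mul_lt_mul_right h2 h2pos.le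
  have : n < m + 1 := by exact_mod_cast h1'
  have : m < n + 1 := by exact_mod_cast h2'
  omega


/-- Average of an `ℝ≥0∞`-valued function over a dyadic interval. -/
def davg (u : ℝ → ℝ≥0∞) (p : ℤ × ℤ) : ℝ≥0∞ :=
  (volume (dyadicI p))⁻¹ * ∫⁻ x in dyadicI p, u x

/-- The dyadic maximal function. -/
def Md (u : ℝ → ℝ≥0∞) (x : ℝ) : ℝ≥0∞ := ⨆ (p : ℤ × ℤ) (_ : x ∈ dyadicI p), davg u p

lemma le_Md {u : ℝ → ℝ≥0∞} {x : ℝ} {p : ℤ × ℤ} (hx : x ∈ dyadicI p) : davg u p ≤ Md u x :=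
  le_iSup₂ (f := fun (p : ℤ × ℤ) (_ : x ∈ dyadicI p) => davg u p) p hx

lemma Md_eq (u : ℝ → ℝ≥0∞) (x : ℝ) :
    Md u x = ⨆ p : ℤ × ℤ, (dyadicI p).indicator (fun _ => davg u p) x := by
  unfold Md
  congr 1
  ext p
  by_cases h : x ∈ dyadicI p
  · simp [h]
  · simp [h]

lemma measurable_Md (u : ℝ → ℝ≥0∞) : Measurable (Md u) := by
  have : Md u = fun x => ⨆ p : ℤ × ℤ, (dyadicI p).indicator (fun _ => davg u p) x :=
    funext (Md_eq u)
  rw [this]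
  exact Measurable.iSup fun p => measurable_const.indicator (measurableSet_dyadicI p)

lemma davg_le_of_le {u : ℝ → ℝ≥0∞} {L : ℝ≥0∞} (h : ∀ x, u x ≤ L) (p : ℤ × ℤ) :
    davg u p ≤ L := by
  unfold davg
  calc (volume (dyadicI p))⁻¹ * ∫⁻ x in dyadicI p, u x
      ≤ (volume (dyadicI p))⁻¹ * ∫⁻ _x in dyadicI p, L :=
        mul_le_mul_right (lintegral_mono fun x => h x) _
    _ = (volume (dyadicI p))⁻¹ * (L * volume (dyadicI p)) := by rw [setLIntegral_const]
    _ = L * ((volume (dyadicI p))⁻¹ * volume (dyadicI p)) := by ring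
    _ = L := by rw [ENNReal.inv_mul_cancel (vI_ne_zero p) (vI_ne_top p), mul_one]

lemma Md_le_of_le {u : ℝ → ℝ≥0∞} {L : ℝ≥0∞} (h : ∀ x, u x ≤ L) (x : ℝ) : Md u x ≤ L :=
  iSup₂_le fun p _ => davg_le_of_le h p

lemma davg_mul_vol {u : ℝ → ℝ≥0∞} (p : ℤ × ℤ) :
    davg u p * volume (dyadicI p) = ∫⁻ x in dyadicI p, u x := by
  rw [davg, mul_comm (volume (dyadicI p))⁻¹, mul_assoc,
    ENNReal.inv_mul_cancel (vI_ne_zero p) (vI_ne_top p), mul_one]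

lemma int_le_two_zpow {k : ℤ} (hk : 0 ≤ k) : (k : ℝ) ≤ 2 ^ k := by
  lift k to ℕ using hk
  rw [zpow_natCast]
  exact_mod_cast (k.lt_two_pow_self).le

set_option maxHeartbeats 1000000 in
/-- Weak type (1,1) for the dyadic maximal function. -/
lemma Md_weak (u : ℝ → ℝ≥0∞) {t : ℝ≥0∞} (ht : 0 < t) (ht' : t ≠ ⊤)
    (hu : ∫⁻ x, u x ≠ ⊤) :
    t * volume {x | t < Md u x} ≤ ∫⁻ x, u x := by
  set B : Set (ℤ × ℤ) := {p | t < davg u p} with hB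
  have hmem : ∀ x : ℝ, t < Md u x ↔ ∃ p ∈ B, x ∈ dyadicI p := by
    intro x
    rw [Md, lt_iSup_iff]
    constructor
    · rintro ⟨p, hp⟩
      rw [lt_iSup_iff] at hp
      obtain ⟨hx, hp⟩ := hp
      exact ⟨p, hp, hx⟩
    · rintro ⟨p, hp, hx⟩
      exact ⟨p, by rw [lt_iSup_iff]; exact ⟨hx, hp⟩⟩
  have key : ∀ p ∈ B, t * volume (dyadicI p) ≤ ∫⁻ x in dyadicI p, u x := by
    intro p hp
    calc t * volume (dyadicI p) ≤ davg u p * volume (dyadicI p) :=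
          mul_le_mul_left (le_of_lt hp) _
      _ = ∫⁻ x in dyadicI p, u x := davg_mul_vol p
  have hscale : ∃ k₀ : ℤ, ∀ p ∈ B, p.1 ≤ k₀ := by
    set M := (t⁻¹ * ∫⁻ x, u x).toReal with hM
    refine ⟨max ⌈M⌉ 0, fun p hp => ?_⟩
    have hfin : t⁻¹ * ∫⁻ x, u x ≠ ⊤ :=
      ENNReal.mul_ne_top (by simp [ht.ne']) hu
    have h1 : volume (dyadicI p) ≤ t⁻¹ * ∫⁻ x, u x := by
      calc volume (dyadicI p) = t⁻¹ * (t * volume (dyadicI p)) := by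
            rw [← mul_assoc, ENNReal.inv_mul_cancel ht.ne' ht', one_mul]
        _ ≤ t⁻¹ * ∫⁻ x in dyadicI p, u x := mul_le_mul_right (key p hp) _
        _ ≤ t⁻¹ * ∫⁻ x, u x := mul_le_mul_right (setLIntegral_le_lintegral _ _) _
    rcases le_or_gt p.1 0 with h | h
    · exact le_trans h (le_max_right _ _)
    · have h2 : (2:ℝ) ^ p.1 ≤ M := by
        rw [volume_dyadicI] at h1
        rw [hM]
        exact (ENNReal.ofReal_le_iff_le_toReal hfin).1 h1
      have h3 : (p.1 : ℝ) ≤ M := le_trans (int_le_two_zpow h.le) h2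
      have h4 : (p.1 : ℝ) ≤ (⌈M⌉ : ℝ) := le_trans h3 (Int.le_ceil M)
      have h5 : p.1 ≤ ⌈M⌉ := by exact_mod_cast h4
      exact le_trans h5 (le_max_left _ _)
  obtain ⟨k₀, hk₀⟩ := hscale
  set Bmax : Set (ℤ × ℤ) := {p | p ∈ B ∧ ∀ q ∈ B, dyadicI p ⊆ dyadicI q → q.1 ≤ p.1} with hBmax
  have cover : ∀ x : ℝ, t < Md u x → ∃ p ∈ Bmax, x ∈ dyadicI p := by
    intro x hx
    obtain ⟨p₀, hp₀, hxp₀⟩ := (hmem x).1 hx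
    obtain ⟨kk, ⟨nn, hmemk, hxk⟩, hmax⟩ :=
      Int.exists_greatest_of_bdd (P := fun k => ∃ n : ℤ, (k, n) ∈ B ∧ x ∈ dyadicI (k, n))
        ⟨k₀, fun k hk => by obtain ⟨n, hn, _⟩ := hk; exact hk₀ _ hn⟩
        ⟨p₀.1, p₀.2, hp₀, hxp₀⟩
    refine ⟨(kk, nn), ⟨hmemk, ?_⟩, hxk⟩
    intro q hq hsub
    exact hmax q.1 ⟨q.2, hq, hsub hxk⟩
  have hdisj : ∀ p ∈ Bmax, ∀ q ∈ Bmax, p ≠ q → Disjoint (dyadicI p) (dyadicI q) := by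
    have main : ∀ p ∈ Bmax, ∀ q ∈ Bmax, p.1 ≤ q.1 → ∀ x : ℝ,
        x ∈ dyadicI p → x ∈ dyadicI q → p = q := by
      intro p hp q hq hle x hxp hxq
      have hsub := dyadicI_nested hle hxp hxq
      have h1 : q.1 ≤ p.1 := hp.2 q hq.1 hsub
      have heq : p.1 = q.1 := le_antisymm hle h1
      have hxq' : x ∈ dyadicI (p.1, q.2) := by rw [heq]; exact hxq
      have : p.2 = q.2 := dyadicI_same_scale hxp hxq'
      exact Prod.ext heq this
    intro p hp q hq hne
    rw [Set.disjoint_left]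
    intro x hxp hxq
    rcases le_total p.1 q.1 with h | h
    · exact hne (main p hp q hq h x hxp hxq)
    · exact hne ((main q hq p hp h x hxq hxp).symm)
  haveI : Countable ↥Bmax := Set.Countable.to_subtype (Set.to_countable Bmax)
  calc t * volume {x | t < Md u x}
      ≤ t * volume (⋃ p : ↥Bmax, dyadicI p) := by
        refine mul_le_mul_right (measure_mono ?_) _
        intro x hx
        obtain ⟨p, hp, hxp⟩ := cover x hx
        exact mem_iUnion.2 ⟨⟨p, hp⟩, hxp⟩
    _ ≤ t * ∑' p : ↥Bmax, volume (dyadicI p) := mul_le_mul_right (measure_iUnion_le _) _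
    _ = ∑' p : ↥Bmax, t * volume (dyadicI (p : ℤ × ℤ)) := ENNReal.tsum_mul_left.symm
    _ ≤ ∑' p : ↥Bmax, ∫⁻ x in dyadicI (p : ℤ × ℤ), u x :=
        ENNReal.tsum_le_tsum fun p => key p p.prop.1
    _ = ∫⁻ x in ⋃ p : ↥Bmax, dyadicI p, u x :=
        (lintegral_iUnion (fun p => measurableSet_dyadicI _)
          (fun (p q : ↥Bmax) hne => hdisj p p.prop q q.prop (fun h => hne (Subtype.ext h))) u).symm
    _ ≤ ∫⁻ x, u x := setLIntegral_le_lintegral _ _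


/-- Truncated weak type estimate (Calderón–Zygmund trick). -/
lemma Md_weak2 (u : ℝ → ℝ≥0∞) (hu : Measurable u) {t : ℝ≥0∞} (ht : 0 < t) (ht' : t ≠ ⊤)
    (hfin : ∫⁻ x, {y : ℝ | t / 2 < u y}.indicator u x ≠ ⊤) :
    volume {x | t < Md u x} ≤ (t / 2)⁻¹ * ∫⁻ x, {y : ℝ | t / 2 < u y}.indicator u x := by
  set v := {y : ℝ | t / 2 < u y}.indicator u with hv
  have ht2 : (0:ℝ≥0∞) < t / 2 := ENNReal.div_pos ht.ne' (by norm_num)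
  have ht2' : t / 2 ≠ ⊤ := by
    intro h
    exact ht' (by simpa using (ENNReal.div_eq_top.1 h))
  have hub : ∀ x, u x ≤ v x + t / 2 := by
    intro x
    by_cases h : t / 2 < u x
    · have hvx : v x = u x := Set.indicator_of_mem (show x ∈ {y | t / 2 < u y} from h) u
      rw [hvx]; exact le_self_add
    · have hvx : v x = 0 := Set.indicator_of_notMem (show x ∉ {y | t / 2 < u y} from h) u
      rw [hvx, zero_add]; exact not_lt.1 h
  have hMd : ∀ x, Md u x ≤ Md v x + t / 2 := by
    intro x
    refine iSup₂_le fun p hp => ?_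
    have h1 : davg u p ≤ davg v p + t / 2 := by
      unfold davg
      calc (volume (dyadicI p))⁻¹ * ∫⁻ y in dyadicI p, u y
          ≤ (volume (dyadicI p))⁻¹ * ∫⁻ y in dyadicI p, (v y + t / 2) :=
            mul_le_mul_right (lintegral_mono hub) _
        _ = (volume (dyadicI p))⁻¹ * ((∫⁻ y in dyadicI p, v y) + t / 2 * volume (dyadicI p)) := by
            rw [lintegral_add_right _ measurable_const, setLIntegral_const]
        _ = (volume (dyadicI p))⁻¹ * (∫⁻ y in dyadicI p, v y)
              + t / 2 * ((volume (dyadicI p))⁻¹ * volume (dyadicI p)) := by ring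
        _ = (volume (dyadicI p))⁻¹ * (∫⁻ y in dyadicI p, v y) + t / 2 := by
            rw [ENNReal.inv_mul_cancel (vI_ne_zero p) (vI_ne_top p), mul_one]
    exact h1.trans (add_le_add_left (le_Md hp) _)
  have hsub : {x | t < Md u x} ⊆ {x | t / 2 < Md v x} := by
    intro x hx
    by_contra h
    have h' : ¬ (t / 2 < Md v x) := h
    push_neg at h'
    have h2 : Md u x ≤ t / 2 + t / 2 := le_trans (hMd x) (add_le_add_left h' _)
    rw [ENNReal.add_halves] at h2
    exact absurd hx (not_lt.2 h2)
  have hwk := Md_weak v ht2 ht2' hfin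
  calc volume {x | t < Md u x} ≤ volume {x | t / 2 < Md v x} := measure_mono hsub
    _ = (t / 2)⁻¹ * ((t / 2) * volume {x | t / 2 < Md v x}) := by
        rw [← mul_assoc, ENNReal.inv_mul_cancel ht2.ne' ht2', one_mul]
    _ ≤ (t / 2)⁻¹ * ∫⁻ x, v x := mul_le_mul_right hwk _

/-- Constant in the `L^q` bound for the dyadic maximal function. -/
def Cq (q : ℝ) : ℝ≥0∞ :=
  ENNReal.ofReal q * 2 * ENNReal.ofReal ((q - 1)⁻¹) * (2:ℝ≥0∞) ^ (q - 1)

lemma Cq_ne_zero {q : ℝ} (hq : 1 < q) : Cq q ≠ 0 := by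
  have h1 : (0:ℝ) < q := by linarith
  have h2 : (0:ℝ) < (q - 1)⁻¹ := inv_pos.2 (by linarith)
  have h3 : (0:ℝ≥0∞) < (2:ℝ≥0∞) ^ (q - 1) :=
    ENNReal.rpow_pos (by norm_num) (by norm_num)
  exact mul_ne_zero (mul_ne_zero (mul_ne_zero (ENNReal.ofReal_pos.2 h1).ne' (by norm_num))
    (ENNReal.ofReal_pos.2 h2).ne') h3.ne'

lemma Cq_ne_top {q : ℝ} (hq : 1 < q) : Cq q ≠ ⊤ := by
  have h3 : (2:ℝ≥0∞) ^ (q - 1) ≠ ⊤ :=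
    ENNReal.rpow_ne_top_of_nonneg (by linarith) (by norm_num)
  exact ENNReal.mul_ne_top (ENNReal.mul_ne_top (ENNReal.mul_ne_top ENNReal.ofReal_ne_top
    (by norm_num)) ENNReal.ofReal_ne_top) h3

lemma inner_rpow_int {q : ℝ} (hq : 1 < q) {a : ℝ≥0∞} (ha : a ≠ ⊤) :
    (∫⁻ t in Ioi (0:ℝ), (if ENNReal.ofReal t / 2 < a then ENNReal.ofReal (t ^ (q - 2)) else 0))
      = ENNReal.ofReal ((q - 1)⁻¹) * (a * 2) ^ (q - 1) := by
  have h2a : a * 2 ≠ ⊤ := ENNReal.mul_ne_top ha (by norm_num)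
  set T : ℝ := (a * 2).toReal with hT
  have hcond : ∀ t : ℝ, 0 ≤ t → (ENNReal.ofReal t / 2 < a ↔ t < T) := by
    intro t ht
    rw [ENNReal.div_lt_iff (Or.inl (by norm_num)) (Or.inl (by norm_num)),
      ENNReal.ofReal_lt_iff_lt_toReal ht h2a]
  have hstep : (∫⁻ t in Ioi (0:ℝ),
      (if ENNReal.ofReal t / 2 < a then ENNReal.ofReal (t ^ (q - 2)) else 0))
      = ∫⁻ t in Ioo (0:ℝ) T, ENNReal.ofReal (t ^ (q - 2)) := by
    rw [← Set.Iio_inter_Ioi, ← Measure.restrict_restrict measurableSet_Iio,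
      ← lintegral_indicator measurableSet_Iio]
    apply setLIntegral_congr_fun measurableSet_Ioi
    intro t ht
    rw [Set.indicator_apply]
    simp only [mem_Iio]
    exact if_congr (hcond t (le_of_lt ht)) rfl rfl
  rw [hstep]
  rcases le_or_gt T 0 with hT0 | hT0
  · have ha0 : a = 0 := by
      by_contra h
      have : 0 < a * 2 := ENNReal.mul_pos h (by norm_num)
      have : 0 < T := ENNReal.toReal_pos this.ne' h2a
      linarith
    rw [Set.Ioo_eq_empty (by linarith), Measure.restrict_empty, lintegral_zero_measure, ha0]
    rw [zero_mul, ENNReal.zero_rpow_of_pos (by linarith), mul_zero]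
  · have hint : IntegrableOn (fun t : ℝ => t ^ (q - 2)) (Ioo 0 T) :=
      (intervalIntegral.integrableOn_Ioo_rpow_iff hT0).2 (by linarith)
    have hnn : 0 ≤ᵐ[volume.restrict (Ioo (0:ℝ) T)] fun t : ℝ => t ^ (q - 2) := by
      filter_upwards [self_mem_ae_restrict measurableSet_Ioo] with t ht
      exact Real.rpow_nonneg (le_of_lt ht.1) _
    rw [← ofReal_integral_eq_lintegral_ofReal hint hnn]
    have hval : (∫ t in Ioo (0:ℝ) T, t ^ (q - 2)) = T ^ (q - 1) / (q - 1) := by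
      rw [← integral_Ioc_eq_integral_Ioo, ← intervalIntegral.integral_of_le hT0.le,
        integral_rpow (Or.inl (by linarith))]
      have h20 : q - 2 + 1 = q - 1 := by ring
      rw [h20, Real.zero_rpow (by intro h; linarith : q - 1 ≠ 0), sub_zero]
    rw [hval, div_eq_inv_mul, ENNReal.ofReal_mul (inv_nonneg.2 (by linarith)),
      ← ENNReal.ofReal_rpow_of_nonneg hT0.le (by linarith : (0:ℝ) ≤ q - 1),
      ENNReal.ofReal_toReal h2a]


lemma coef_eq {q : ℝ} (hq : 1 < q) {t : ℝ} (ht : 0 < t) :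
    (ENNReal.ofReal t / 2)⁻¹ * ENNReal.ofReal (t ^ (q - 1)) = 2 * ENNReal.ofReal (t ^ (q - 2)) := by
  have hreal : (t / 2)⁻¹ * t ^ (q - 1) = 2 * t ^ (q - 2) := by
    have h1 : t ^ (q - 1) = t * t ^ (q - 2) := by
      rw [show q - 1 = 1 + (q - 2) by ring, Real.rpow_add ht, Real.rpow_one]
    rw [h1, inv_div]
    field_simp
  rw [show (ENNReal.ofReal t / 2) = ENNReal.ofReal (t / 2) by
        rw [ENNReal.ofReal_div_of_pos (by norm_num : (0:ℝ) < 2), ENNReal.ofReal_ofNat],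
    ← ENNReal.ofReal_inv_of_pos (half_pos ht), ← ENNReal.ofReal_mul (inv_nonneg.2 (by positivity)),
    hreal, ENNReal.ofReal_mul (by norm_num : (0:ℝ) ≤ 2), ENNReal.ofReal_ofNat]

lemma mul_rpow_sub_one {q : ℝ} (hq : 1 < q) {a : ℝ≥0∞} (ha : a ≠ ⊤) :
    a * a ^ (q - 1) = a ^ q := by
  by_cases h0 : a = 0
  · rw [h0, zero_mul, ENNReal.zero_rpow_of_pos (by linarith)]
  · have h := ENNReal.rpow_add 1 (q - 1) h0 ha
    rw [show (1:ℝ) + (q - 1) = q by ring, ENNReal.rpow_one] at h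
    exact h.symm

lemma inner_per_x {q : ℝ} (hq : 1 < q) {a : ℝ≥0∞} (ha : a ≠ ⊤) :
    (∫⁻ t in Ioi (0:ℝ), (if ENNReal.ofReal t / 2 < a then a else 0) * ENNReal.ofReal (t ^ (q - 2)))
      = ENNReal.ofReal ((q - 1)⁻¹) * (2:ℝ≥0∞) ^ (q - 1) * a ^ q := by
  have hpt : ∀ t : ℝ, (if ENNReal.ofReal t / 2 < a then a else 0) * ENNReal.ofReal (t ^ (q - 2))
      = a * (if ENNReal.ofReal t / 2 < a then ENNReal.ofReal (t ^ (q - 2)) else 0) := by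
    intro t
    split_ifs with h
    · ring
    · rw [zero_mul, mul_zero]
  rw [lintegral_congr hpt, lintegral_const_mul' a _ ha, inner_rpow_int hq ha,
    ENNReal.mul_rpow_of_nonneg _ _ (by linarith : (0:ℝ) ≤ q - 1)]
  rw [show a * (ENNReal.ofReal ((q-1)⁻¹) * (a ^ (q-1) * (2:ℝ≥0∞) ^ (q-1)))
      = ENNReal.ofReal ((q-1)⁻¹) * (2:ℝ≥0∞) ^ (q-1) * (a * a ^ (q-1)) by ring,
    mul_rpow_sub_one hq ha]

/-- `L^q` boundedness of the dyadic maximal function, for bounded input. -/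
lemma lintegral_Md_rpow (u : ℝ → ℝ≥0∞) (hu : Measurable u) {L : ℝ≥0∞} (hL : L ≠ ⊤)
    (huL : ∀ x, u x ≤ L) {q : ℝ} (hq : 1 < q) :
    ∫⁻ x, Md u x ^ q ≤ Cq q * ∫⁻ x, u x ^ q := by
  by_cases hfin : ∫⁻ x, u x ^ q = ⊤
  · rw [hfin, ENNReal.mul_top (Cq_ne_zero hq)]; exact le_top
  have hq0 : (0:ℝ) < q := by linarith
  have hq1 : (0:ℝ) ≤ q - 1 := by linarith
  have hMdtop : ∀ x, Md u x ≠ ⊤ := fun x => ((Md_le_of_le huL x).trans_lt hL.lt_top).ne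
  have hutop : ∀ x, u x ≠ ⊤ := fun x => ((huL x).trans_lt hL.lt_top).ne
  set v : ℝ → ℝ → ℝ≥0∞ := fun t x => {y : ℝ | ENNReal.ofReal t / 2 < u y}.indicator u x with hv
  -- finiteness of the truncations
  have hvfin : ∀ t : ℝ, 0 < t → ∫⁻ x, v t x ≠ ⊤ := by
    intro t ht
    set s : ℝ≥0∞ := ENNReal.ofReal t / 2 with hs
    have hs0 : 0 < s := ENNReal.div_pos (ENNReal.ofReal_pos.2 ht).ne' (by norm_num)
    have hs' : s ≠ ⊤ := by
      intro h
      exact (ENNReal.div_eq_top.1 h).elim (fun h => by simp at h)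
        (fun h => ENNReal.ofReal_ne_top h.1)
    have hsq0 : s ^ (q - 1) ≠ 0 := (ENNReal.rpow_pos hs0 hs').ne'
    have hsq' : s ^ (q - 1) ≠ ⊤ := ENNReal.rpow_ne_top_of_nonneg hq1 hs'
    have hpt : ∀ x, v t x * s ^ (q - 1) ≤ u x ^ q := by
      intro x
      by_cases h : s < u x
      · have hvx : v t x = u x := Set.indicator_of_mem (show x ∈ {y | s < u y} from h) u
        rw [hvx, ← mul_rpow_sub_one hq (hutop x)]
        exact mul_le_mul_right (ENNReal.rpow_le_rpow h.le hq1) _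
      · have hvx : v t x = 0 := Set.indicator_of_notMem (show x ∉ {y | s < u y} from h) u
        rw [hvx, zero_mul]; exact bot_le
    intro htop
    have hmv : Measurable (v t) := hu.indicator (measurableSet_lt measurable_const hu)
    have h1 : (∫⁻ x, v t x) * s ^ (q - 1) ≤ ∫⁻ x, u x ^ q := by
      rw [← lintegral_mul_const _ hmv]
      exact lintegral_mono hpt
    rw [htop, ENNReal.top_mul hsq0] at h1
    exact hfin (top_le_iff.1 h1)
  -- the layer cake formula
  have hf_mble : AEMeasurable (fun x => (Md u x).toReal) volume :=
    ((measurable_Md u).ennreal_toReal).aemeasurable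
  have hlc := lintegral_rpow_eq_lintegral_meas_lt_mul volume
      (f := fun x => (Md u x).toReal) (ae_of_all _ fun x => ENNReal.toReal_nonneg) hf_mble hq0
  have hLHS : ∫⁻ x, Md u x ^ q = ∫⁻ x, ENNReal.ofReal ((Md u x).toReal ^ q) := by
    apply lintegral_congr
    intro x
    rw [← ENNReal.ofReal_rpow_of_nonneg ENNReal.toReal_nonneg hq0.le,
      ENNReal.ofReal_toReal (hMdtop x)]
  -- pointwise bound on the distribution function
  have step1 : ∀ t : ℝ, t ∈ Ioi (0:ℝ) →
      volume {x | t < (Md u x).toReal} * ENNReal.ofReal (t ^ (q - 1)) ≤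
        2 * ∫⁻ x, v t x * ENNReal.ofReal (t ^ (q - 2)) := by
    intro t ht
    rw [mem_Ioi] at ht
    have htpos : 0 < ENNReal.ofReal t := ENNReal.ofReal_pos.2 ht
    have hset : {x | t < (Md u x).toReal} = {x | ENNReal.ofReal t < Md u x} := by
      ext x
      simp only [mem_setOf_eq]
      exact (ENNReal.ofReal_lt_iff_lt_toReal ht.le (hMdtop x)).symm
    have hwk := Md_weak2 u hu htpos ENNReal.ofReal_ne_top (hvfin t ht)
    have hmv : Measurable (v t) := hu.indicator (measurableSet_lt measurable_const hu)
    calc volume {x | t < (Md u x).toReal} * ENNReal.ofReal (t ^ (q - 1))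
        ≤ ((ENNReal.ofReal t / 2)⁻¹ * ∫⁻ x, v t x) * ENNReal.ofReal (t ^ (q - 1)) := by
          rw [hset]; exact mul_le_mul_left hwk _
      _ = ((ENNReal.ofReal t / 2)⁻¹ * ENNReal.ofReal (t ^ (q - 1))) * ∫⁻ x, v t x := by ring
      _ = (2 * ENNReal.ofReal (t ^ (q - 2))) * ∫⁻ x, v t x := by rw [coef_eq hq ht]
      _ = 2 * ((∫⁻ x, v t x) * ENNReal.ofReal (t ^ (q - 2))) := by ring
      _ = 2 * ∫⁻ x, v t x * ENNReal.ofReal (t ^ (q - 2)) := by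
          rw [lintegral_mul_const _ hmv]
  -- joint measurability for Tonelli
  have hFmble : Measurable (fun z : ℝ × ℝ => v z.1 z.2 * ENNReal.ofReal (z.1 ^ (q - 2))) := by
    have h1 : Measurable fun z : ℝ × ℝ => v z.1 z.2 := by
      have hset : MeasurableSet {z : ℝ × ℝ | ENNReal.ofReal z.1 / 2 < u z.2} :=
        measurableSet_lt ((ENNReal.measurable_ofReal.comp measurable_fst).div_const 2)
          (hu.comp measurable_snd)
      have : (fun z : ℝ × ℝ => v z.1 z.2) =
          {z : ℝ × ℝ | ENNReal.ofReal z.1 / 2 < u z.2}.indicator (fun z => u z.2) := by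
        ext z
        rw [hv]
        simp only [Set.indicator_apply, mem_setOf_eq]
      rw [this]
      exact (hu.comp measurable_snd).indicator hset
    exact h1.mul ((measurable_fst.pow measurable_const).ennreal_ofReal)
  calc ∫⁻ x, Md u x ^ q
      = ENNReal.ofReal q * ∫⁻ t in Ioi 0,
          volume {x | t < (Md u x).toReal} * ENNReal.ofReal (t ^ (q - 1)) := by
        rw [hLHS]; exact hlc
    _ ≤ ENNReal.ofReal q * ∫⁻ t in Ioi 0,
          2 * ∫⁻ x, v t x * ENNReal.ofReal (t ^ (q - 2)) := by
        refine mul_le_mul_right (lintegral_mono_ae ?_) _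
        filter_upwards [self_mem_ae_restrict measurableSet_Ioi] with t ht
        exact step1 t ht
    _ = ENNReal.ofReal q * (2 * ∫⁻ t in Ioi 0, ∫⁻ x, v t x * ENNReal.ofReal (t ^ (q - 2))) := by
        rw [lintegral_const_mul' 2 _ (by norm_num)]
    _ = ENNReal.ofReal q * (2 * ∫⁻ x, ∫⁻ t in Ioi 0, v t x * ENNReal.ofReal (t ^ (q - 2))) := by
        rw [lintegral_lintegral_swap (hFmble.aemeasurable)]
    _ = ENNReal.ofReal q * (2 * ∫⁻ x, ENNReal.ofReal ((q - 1)⁻¹) * (2:ℝ≥0∞) ^ (q - 1) * u x ^ q) := by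
        congr 2
        apply lintegral_congr
        intro x
        rw [← inner_per_x hq (hutop x)]
        apply lintegral_congr
        intro t
        congr 1
        rw [hv]
        simp only [Set.indicator_apply, mem_setOf_eq]
    _ = ENNReal.ofReal q * (2 * (ENNReal.ofReal ((q - 1)⁻¹) * (2:ℝ≥0∞) ^ (q - 1) * ∫⁻ x, u x ^ q)) := by
        rw [lintegral_const_mul' _ _ (ENNReal.mul_ne_top ENNReal.ofReal_ne_top
          (ENNReal.rpow_ne_top_of_nonneg hq1 (by norm_num)))]
    _ = Cq q * ∫⁻ x, u x ^ q := by rw [Cq]; ring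



lemma measurableSet_dyadicR (r : RectIx) : MeasurableSet (dyadicR r) :=
  (measurableSet_dyadicI r.1).prod (measurableSet_dyadicI r.2)

lemma volume_dyadicR (r : RectIx) :
    volume (dyadicR r) = volume (dyadicI r.1) * volume (dyadicI r.2) := by
  rw [dyadicR, Measure.volume_eq_prod, Measure.prod_prod]

lemma volume_dyadicR_eq (r : RectIx) : volume (dyadicR r) = ENNReal.ofReal (rlen r) := by
  rw [volume_dyadicR, volume_dyadicI, volume_dyadicI, rlen,
    ENNReal.ofReal_mul (dlen_pos r.1).le]

lemma vR_ne_zero (r : RectIx) : volume (dyadicR r) ≠ 0 := by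
  rw [volume_dyadicR]
  exact mul_ne_zero (vI_ne_zero r.1) (vI_ne_zero r.2)

lemma vR_ne_top (r : RectIx) : volume (dyadicR r) ≠ ⊤ := by
  rw [volume_dyadicR]
  exact ENNReal.mul_ne_top (vI_ne_top r.1) (vI_ne_top r.2)

lemma restrict_dyadicR (r : RectIx) :
    (volume : Measure (ℝ × ℝ)).restrict (dyadicR r) =
      (volume.restrict (dyadicI r.1)).prod (volume.restrict (dyadicI r.2)) := by
  rw [Measure.prod_restrict, dyadicR, Measure.volume_eq_prod]

lemma lint_rect {u : ℝ × ℝ → ℝ≥0∞} (hu : Measurable u) (r : RectIx) :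
    ∫⁻ z in dyadicR r, u z =
      ∫⁻ x in dyadicI r.1, ∫⁻ y in dyadicI r.2, u (x, y) := by
  rw [restrict_dyadicR, MeasureTheory.lintegral_prod _ hu.aemeasurable]

/-- Average over a dyadic rectangle. -/
def davgR (u : ℝ × ℝ → ℝ≥0∞) (r : RectIx) : ℝ≥0∞ :=
  (volume (dyadicR r))⁻¹ * ∫⁻ z in dyadicR r, u z

/-- The strong (dyadic) maximal function. -/
def MS (u : ℝ × ℝ → ℝ≥0∞) (z : ℝ × ℝ) : ℝ≥0∞ :=
  ⨆ (r : RectIx) (_ : z ∈ dyadicR r), davgR u r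

lemma le_MS {u : ℝ × ℝ → ℝ≥0∞} {z : ℝ × ℝ} {r : RectIx} (hz : z ∈ dyadicR r) :
    davgR u r ≤ MS u z :=
  le_iSup₂ (f := fun (r : RectIx) (_ : z ∈ dyadicR r) => davgR u r) r hz

lemma measurable_MS (u : ℝ × ℝ → ℝ≥0∞) : Measurable (MS u) := by
  have : MS u = fun z => ⨆ r : RectIx, (dyadicR r).indicator (fun _ => davgR u r) z := by
    ext z
    unfold MS
    congr 1
    ext r
    by_cases h : z ∈ dyadicR r
    · simp [h]
    · simp [h]
  rw [this]
  exact Measurable.iSup fun r => measurable_const.indicator (measurableSet_dyadicR r)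

/-- Vertical maximal function. -/
def Mv (u : ℝ × ℝ → ℝ≥0∞) (z : ℝ × ℝ) : ℝ≥0∞ := Md (fun y => u (z.1, y)) z.2

/-- Horizontal maximal function. -/
def Mh (w : ℝ × ℝ → ℝ≥0∞) (z : ℝ × ℝ) : ℝ≥0∞ := Md (fun x => w (x, z.2)) z.1

lemma measurable_Mv {u : ℝ × ℝ → ℝ≥0∞} (hu : Measurable u) : Measurable (Mv u) := by
  have heq : Mv u = fun z : ℝ × ℝ => ⨆ p : ℤ × ℤ,
      ((volume (dyadicI p))⁻¹ * ∫⁻ y in dyadicI p, u (z.1, y)) *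
        (dyadicI p).indicator (fun _ => (1:ℝ≥0∞)) z.2 := by
    ext z
    rw [Mv, Md_eq]
    congr 1
    ext p
    by_cases h : z.2 ∈ dyadicI p
    · simp [h, davg]
    · simp [h]
  rw [heq]
  refine Measurable.iSup fun p => Measurable.mul ?_ ?_
  · have h1 : Measurable fun x : ℝ => ∫⁻ y in dyadicI p, u (x, y) :=
      Measurable.lintegral_prod_right (f := fun x y => u (x, y)) hu
    exact (measurable_const.mul h1).comp measurable_fst
  · exact (measurable_const.indicator (measurableSet_dyadicI p)).comp measurable_snd

lemma measurable_Mh {w : ℝ × ℝ → ℝ≥0∞} (hw : Measurable w) : Measurable (Mh w) := by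
  have heq : Mh w = fun z : ℝ × ℝ => ⨆ p : ℤ × ℤ,
      ((volume (dyadicI p))⁻¹ * ∫⁻ x in dyadicI p, w (x, z.2)) *
        (dyadicI p).indicator (fun _ => (1:ℝ≥0∞)) z.1 := by
    ext z
    rw [Mh, Md_eq]
    congr 1
    ext p
    by_cases h : z.1 ∈ dyadicI p
    · simp [h, davg]
    · simp [h]
  rw [heq]
  refine Measurable.iSup fun p => Measurable.mul ?_ ?_
  · have h1 : Measurable fun y : ℝ => ∫⁻ x in dyadicI p, w (x, y) :=
      Measurable.lintegral_prod_left (f := fun x y => w (x, y)) hw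
    exact (measurable_const.mul h1).comp measurable_snd
  · exact (measurable_const.indicator (measurableSet_dyadicI p)).comp measurable_fst

lemma Mv_le_of_le {u : ℝ × ℝ → ℝ≥0∞} {L : ℝ≥0∞} (h : ∀ z, u z ≤ L) (z : ℝ × ℝ) :
    Mv u z ≤ L := Md_le_of_le (fun y => h (z.1, y)) z.2

lemma MS_le_iter {u : ℝ × ℝ → ℝ≥0∞} (hu : Measurable u) (z : ℝ × ℝ) :
    MS u z ≤ Mh (Mv u) z := by
  refine iSup₂_le fun r hz => ?_
  rw [dyadicR, Set.mem_prod] at hz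
  have key : davgR u r ≤ davg (fun x => Mv u (x, z.2)) r.1 := by
    rw [davgR, volume_dyadicR, lint_rect hu r,
      ENNReal.mul_inv (Or.inl (vI_ne_zero r.1)) (Or.inl (vI_ne_top r.1)), mul_assoc, davg]
    refine mul_le_mul_right ?_ _
    rw [← lintegral_const_mul' _ _ (ENNReal.inv_ne_top.2 (vI_ne_zero r.2))]
    refine lintegral_mono fun x => ?_
    exact le_Md (u := fun y => u (x, y)) hz.2
  exact key.trans (le_Md hz.1)

/-- `L^q` bound for the strong maximal function. -/
lemma lintegral_MS_rpow (u : ℝ × ℝ → ℝ≥0∞) (hu : Measurable u) {L : ℝ≥0∞} (hL : L ≠ ⊤)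
    (huL : ∀ z, u z ≤ L) {q : ℝ} (hq : 1 < q) :
    ∫⁻ z, MS u z ^ q ≤ Cq q * Cq q * ∫⁻ z, u z ^ q := by
  have hq0 : (0:ℝ) ≤ q := by linarith
  have hMv : Measurable (Mv u) := measurable_Mv hu
  have hMhMv : Measurable (Mh (Mv u)) := measurable_Mh hMv
  calc ∫⁻ z, MS u z ^ q ≤ ∫⁻ z, Mh (Mv u) z ^ q :=
        lintegral_mono fun z => ENNReal.rpow_le_rpow (MS_le_iter hu z) hq0
    _ = ∫⁻ y, ∫⁻ x, Mh (Mv u) (x, y) ^ q := by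
        rw [← MeasureTheory.lintegral_prod_symm _ ((hMhMv.pow measurable_const).aemeasurable),
          ← Measure.volume_eq_prod]
    _ ≤ ∫⁻ y, Cq q * ∫⁻ x, Mv u (x, y) ^ q := by
        refine lintegral_mono fun y => ?_
        have hmw : Measurable fun x => Mv u (x, y) := hMv.comp measurable_prodMk_right
        have hbw : ∀ x, Mv u (x, y) ≤ L := fun x => Mv_le_of_le huL (x, y)
        exact lintegral_Md_rpow _ hmw hL hbw hq
    _ = Cq q * ∫⁻ y, ∫⁻ x, Mv u (x, y) ^ q := by
        rw [lintegral_const_mul' _ _ (Cq_ne_top hq)]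
    _ = Cq q * ∫⁻ x, ∫⁻ y, Mv u (x, y) ^ q := by
        rw [lintegral_lintegral_swap (((hMv.comp measurable_swap).pow measurable_const).aemeasurable)]
    _ ≤ Cq q * ∫⁻ x, Cq q * ∫⁻ y, u (x, y) ^ q := by
        refine mul_le_mul_right (lintegral_mono fun x => ?_) _
        have hmw : Measurable fun y => u (x, y) := hu.comp measurable_prodMk_left
        have hbw : ∀ y, u (x, y) ≤ L := fun y => huL (x, y)
        exact lintegral_Md_rpow _ hmw hL hbw hq
    _ = Cq q * Cq q * ∫⁻ z, u z ^ q := by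
        rw [lintegral_const_mul' _ _ (Cq_ne_top hq), ← mul_assoc,
          ← MeasureTheory.lintegral_prod _ ((hu.pow measurable_const).aemeasurable),
          ← Measure.volume_eq_prod]

end JNAux

/-- **John–Nirenberg for sparse families.** If `𝒞` is a finite `η`-sparse family
of dyadic rectangles all contained in an open set `Ω`, then for `1 ≤ p < ∞`,
`‖Σ_{R∈𝒞} χ_R‖_{L^p} ≤ C(p,η) |Ω|^{1/p}` (stated with both sides raised to the power `p`). -/
theorem john_nirenberg_sparse (η : ℝ) (hη : 0 < η) (p : ℝ) (hp : 1 ≤ p) :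
    ∃ C : ℝ, 0 < C ∧
      ∀ (𝒞 : Finset RectIx) (E : RectIx → Set (ℝ × ℝ)),
        (∀ r ∈ 𝒞, MeasurableSet (E r)) →
        (∀ r ∈ 𝒞, E r ⊆ dyadicR r) →
        (∀ r ∈ 𝒞, ENNReal.ofReal (η * rlen r) ≤ volume (E r)) →
        (𝒞 : Set RectIx).PairwiseDisjoint E →
        ∀ Ω : Set (ℝ × ℝ), IsOpen Ω → (∀ r ∈ 𝒞, dyadicR r ⊆ Ω) →
        ∫⁻ z : ℝ × ℝ, ENNReal.ofReal ((∑ r ∈ 𝒞, (dyadicR r).indicator 1 z) ^ p) ∂volume ≤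
          ENNReal.ofReal (C ^ p) * volume Ω := by
  classical
  have hη0 : ENNReal.ofReal η ≠ 0 := (ENNReal.ofReal_pos.2 hη).ne'
  set n : ℕ := ⌈p⌉₊ + 1 with hn
  have hn2 : 2 ≤ n := by
    have h1 : 1 ≤ ⌈p⌉₊ := Nat.one_le_ceil_iff.2 (by linarith)
    omega
  have hn1 : (1:ℝ) < (n:ℝ) := by exact_mod_cast Nat.lt_of_lt_of_le Nat.one_lt_two hn2
  have hn1' : (n:ℝ) - 1 ≠ 0 := by linarith
  have hpn : p ≤ (n:ℝ) := by
    refine (Nat.le_ceil p).trans ?_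
    exact_mod_cast Nat.le_succ _
  have hcon : Real.HolderConjugate (n:ℝ) ((n:ℝ)/((n:ℝ)-1)) :=
    Real.HolderConjugate.conjExponent hn1
  set q : ℝ := (n:ℝ)/((n:ℝ)-1) with hqdef
  have hq : 1 < q := hcon.symm.lt
  have hq0 : (0:ℝ) ≤ 1/q := by positivity
  set K : ℝ≥0∞ := (ENNReal.ofReal η)⁻¹ * (JNAux.Cq q * JNAux.Cq q) ^ (1/q) with hK
  have hKtop : K ≠ ⊤ := ENNReal.mul_ne_top (ENNReal.inv_ne_top.2 hη0)
    (ENNReal.rpow_ne_top_of_nonneg hq0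
      (ENNReal.mul_ne_top (JNAux.Cq_ne_top hq) (JNAux.Cq_ne_top hq)))
  have hKn_top : K ^ (n:ℝ) ≠ ⊤ := ENNReal.rpow_ne_top_of_nonneg (by positivity) hKtop
  refine ⟨max ((K ^ (n:ℝ)).toReal) 1, lt_of_lt_of_le one_pos (le_max_right _ _), ?_⟩
  set C : ℝ := max ((K ^ (n:ℝ)).toReal) 1 with hC
  have hC1 : 1 ≤ C := le_max_right _ _
  have hCp : K ^ (n:ℝ) ≤ ENNReal.ofReal (C ^ p) := by
    rw [← ENNReal.ofReal_toReal hKn_top]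
    apply ENNReal.ofReal_le_ofReal
    calc (K ^ (n:ℝ)).toReal ≤ C := le_max_left _ _
      _ = C ^ (1:ℝ) := (Real.rpow_one C).symm
      _ ≤ C ^ p := Real.rpow_le_rpow_of_exponent_le hC1 hp
  intro 𝒞 E hEm hEsub hEvol hEdisj Ω hΩopen hΩsub
  have hΩm : MeasurableSet Ω := hΩopen.measurableSet
  set Fe : ℝ × ℝ → ℝ≥0∞ := fun z => ∑ r ∈ 𝒞, (dyadicR r).indicator 1 z with hFe
  have hFe_m : Measurable Fe := by
    apply Finset.measurable_sum
    intro r _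
    exact measurable_const.indicator (JNAux.measurableSet_dyadicR r)
  set N : ℝ≥0∞ := (𝒞.card : ℝ≥0∞) with hN
  have hFe_le : ∀ z, Fe z ≤ N := by
    intro z
    rw [hFe, hN]
    calc ∑ r ∈ 𝒞, (dyadicR r).indicator (1 : (ℝ×ℝ) → ℝ≥0∞) z ≤ ∑ _r ∈ 𝒞, 1 := by
          refine Finset.sum_le_sum fun r _ => ?_
          by_cases h : z ∈ dyadicR r
          · rw [Set.indicator_of_mem h, Pi.one_apply]
          · rw [Set.indicator_of_notMem h]; exact zero_le_one
      _ = (𝒞.card : ℝ≥0∞) := by rw [Finset.sum_const, nsmul_eq_mul, mul_one]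
  set g : ℝ × ℝ → ℝ≥0∞ := fun z => Fe z ^ (n - 1) with hg
  have hg_m : Measurable g := hFe_m.pow_const _
  set L : ℝ≥0∞ := N ^ (n - 1) with hL
  have hLtop : L ≠ ⊤ := by rw [hL, hN]; exact ENNReal.pow_ne_top (ENNReal.natCast_ne_top _)
  have hg_le : ∀ z, g z ≤ L := fun z => pow_le_pow_left' (hFe_le z) _
  set X : ℝ≥0∞ := ∫⁻ z, Fe z ^ n with hX
  have hpow : ∀ z, Fe z ^ n = g z * Fe z := by
    intro z
    rw [hg]
    conv_lhs => rw [show n = (n-1)+1 by omega]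
    rw [pow_succ]
  have hXsum : X = ∑ r ∈ 𝒞, ∫⁻ z in dyadicR r, g z := by
    rw [hX]
    calc ∫⁻ z, Fe z ^ n = ∫⁻ z, ∑ r ∈ 𝒞, (dyadicR r).indicator g z := by
          apply lintegral_congr
          intro z
          rw [hpow z]
          have h1 : g z * Fe z = ∑ r ∈ 𝒞, g z * (dyadicR r).indicator 1 z := by
            rw [hFe, Finset.mul_sum]
          rw [h1]
          refine Finset.sum_congr rfl fun r _ => ?_
          by_cases h : z ∈ dyadicR r
          · rw [Set.indicator_of_mem h, Set.indicator_of_mem h, Pi.one_apply, mul_one]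
          · rw [Set.indicator_of_notMem h, Set.indicator_of_notMem h, mul_zero]
      _ = ∑ r ∈ 𝒞, ∫⁻ z, (dyadicR r).indicator g z :=
          lintegral_finset_sum _ (fun r _ => hg_m.indicator (JNAux.measurableSet_dyadicR r))
      _ = ∑ r ∈ 𝒞, ∫⁻ z in dyadicR r, g z :=
          Finset.sum_congr rfl fun r _ => lintegral_indicator (JNAux.measurableSet_dyadicR r) _
  have hMS_m : Measurable (JNAux.MS g) := JNAux.measurable_MS g
  have hterm : ∀ r ∈ 𝒞,
      (∫⁻ z in dyadicR r, g z) ≤ (ENNReal.ofReal η)⁻¹ * ∫⁻ z in E r, JNAux.MS g z := by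
    intro r hr
    have h1 : ∫⁻ z in dyadicR r, g z = JNAux.davgR g r * volume (dyadicR r) := by
      rw [JNAux.davgR, mul_comm (volume (dyadicR r))⁻¹, mul_assoc,
        ENNReal.inv_mul_cancel (JNAux.vR_ne_zero r) (JNAux.vR_ne_top r), mul_one]
    have h2 : volume (dyadicR r) ≤ (ENNReal.ofReal η)⁻¹ * volume (E r) := by
      have h3 := hEvol r hr
      rw [ENNReal.ofReal_mul hη.le] at h3
      rw [JNAux.volume_dyadicR_eq]
      calc ENNReal.ofReal (rlen r)
          = (ENNReal.ofReal η)⁻¹ * (ENNReal.ofReal η * ENNReal.ofReal (rlen r)) := by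
            rw [← mul_assoc, ENNReal.inv_mul_cancel hη0 ENNReal.ofReal_ne_top, one_mul]
        _ ≤ (ENNReal.ofReal η)⁻¹ * volume (E r) := mul_le_mul_right h3 _
    have h4 : JNAux.davgR g r * volume (E r) ≤ ∫⁻ z in E r, JNAux.MS g z := by
      calc JNAux.davgR g r * volume (E r) = ∫⁻ _z in E r, JNAux.davgR g r := by
            rw [setLIntegral_const]
        _ ≤ ∫⁻ z in E r, JNAux.MS g z :=
            setLIntegral_mono hMS_m fun z hz => JNAux.le_MS (hEsub r hr hz)
    calc ∫⁻ z in dyadicR r, g z = JNAux.davgR g r * volume (dyadicR r) := h1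
      _ ≤ JNAux.davgR g r * ((ENNReal.ofReal η)⁻¹ * volume (E r)) := mul_le_mul_right h2 _
      _ = (ENNReal.ofReal η)⁻¹ * (JNAux.davgR g r * volume (E r)) := by ring
      _ ≤ (ENNReal.ofReal η)⁻¹ * ∫⁻ z in E r, JNAux.MS g z := mul_le_mul_right h4 _
  have hXle1 : X ≤ (ENNReal.ofReal η)⁻¹ * ∫⁻ z in Ω, JNAux.MS g z := by
    rw [hXsum]
    calc ∑ r ∈ 𝒞, ∫⁻ z in dyadicR r, g z
        ≤ ∑ r ∈ 𝒞, (ENNReal.ofReal η)⁻¹ * ∫⁻ z in E r, JNAux.MS g z := Finset.sum_le_sum hterm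
      _ = (ENNReal.ofReal η)⁻¹ * ∑ r ∈ 𝒞, ∫⁻ z in E r, JNAux.MS g z := by rw [Finset.mul_sum]
      _ ≤ (ENNReal.ofReal η)⁻¹ * ∫⁻ z in Ω, JNAux.MS g z := by
          refine mul_le_mul_right ?_ _
          rw [← lintegral_biUnion_finset hEdisj (fun r hr => hEm r hr)]
          exact lintegral_mono_set
            (Set.iUnion₂_subset fun r hr => (hEsub r hr).trans (hΩsub r hr))
  have hhold : ∫⁻ z in Ω, JNAux.MS g z ≤
      (∫⁻ z, JNAux.MS g z ^ q) ^ (1/q) * (volume Ω) ^ (1/(n:ℝ)) := by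
    have h1 : ∫⁻ z in Ω, JNAux.MS g z =
        ∫⁻ z, (JNAux.MS g * Ω.indicator (fun _ => (1:ℝ≥0∞))) z := by
      rw [← lintegral_indicator hΩm]
      apply lintegral_congr
      intro z
      simp only [Pi.mul_apply, Set.indicator_apply]
      by_cases h : z ∈ Ω <;> simp [h]
    have h2 := ENNReal.lintegral_mul_le_Lp_mul_Lq volume hcon.symm
      (f := JNAux.MS g) (g := Ω.indicator (fun _ => (1:ℝ≥0∞))) hMS_m.aemeasurable
      ((measurable_const.indicator hΩm).aemeasurable)
    rw [h1]
    refine h2.trans ?_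
    have h3 : (∫⁻ z, (Ω.indicator (fun _ => (1:ℝ≥0∞)) z) ^ ((n:ℝ))) = volume Ω := by
      rw [← lintegral_indicator_one hΩm]
      apply lintegral_congr
      intro z
      by_cases h : z ∈ Ω
      · simp [h]
      · simp [h, ENNReal.zero_rpow_of_pos (by linarith : (0:ℝ) < (n:ℝ))]
    rw [h3]
  have hgq : (∫⁻ z, g z ^ q) = X := by
    rw [hX]
    apply lintegral_congr
    intro z
    simp only [hg]
    rw [← ENNReal.rpow_natCast (Fe z) n, ← ENNReal.rpow_natCast (Fe z) (n-1),
      ← ENNReal.rpow_mul]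
    congr 1
    have hc : ((n - 1 : ℕ) : ℝ) = (n:ℝ) - 1 := by
      have h1 : (1:ℕ) ≤ n := by omega
      push_cast [h1]
      ring
    rw [hc, hqdef]
    field_simp
  have hMSq : (∫⁻ z, JNAux.MS g z ^ q) ≤ (JNAux.Cq q * JNAux.Cq q) * X := by
    have h := JNAux.lintegral_MS_rpow g hg_m hLtop hg_le hq
    rwa [hgq] at h
  have hmain : X ≤ K * X ^ (1/q) * (volume Ω) ^ (1/(n:ℝ)) := by
    calc X ≤ (ENNReal.ofReal η)⁻¹ * ∫⁻ z in Ω, JNAux.MS g z := hXle1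
      _ ≤ (ENNReal.ofReal η)⁻¹ *
            ((∫⁻ z, JNAux.MS g z ^ q) ^ (1/q) * (volume Ω) ^ (1/(n:ℝ))) :=
          mul_le_mul_right hhold _
      _ ≤ (ENNReal.ofReal η)⁻¹ *
            (((JNAux.Cq q * JNAux.Cq q) * X) ^ (1/q) * (volume Ω) ^ (1/(n:ℝ))) :=
          mul_le_mul_right (mul_le_mul_left (ENNReal.rpow_le_rpow hMSq hq0) _) _
      _ = K * X ^ (1/q) * (volume Ω) ^ (1/(n:ℝ)) := by
          rw [ENNReal.mul_rpow_of_nonneg _ _ hq0, hK]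
          ring
  have hFefin : (∫⁻ z, Fe z) ≠ ⊤ := by
    have h1 : (∫⁻ z, Fe z) = ∑ r ∈ 𝒞, volume (dyadicR r) := by
      simp only [hFe]
      rw [lintegral_finset_sum 𝒞 (f := fun r z => (dyadicR r).indicator 1 z)
        (fun r _ => measurable_one.indicator (JNAux.measurableSet_dyadicR r))]
      exact Finset.sum_congr rfl fun r _ => lintegral_indicator_one (JNAux.measurableSet_dyadicR r)
    rw [h1]
    exact (ENNReal.sum_lt_top.2 fun r _ => (JNAux.vR_ne_top r).lt_top).ne
  have hXfin : X ≠ ⊤ := by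
    have h1 : X ≤ L * ∫⁻ z, Fe z := by
      rw [hX, ← lintegral_const_mul' _ _ hLtop]
      refine lintegral_mono fun z => ?_
      rw [hpow z]
      exact mul_le_mul_left (hg_le z) _
    exact (h1.trans_lt (ENNReal.mul_lt_top hLtop.lt_top hFefin.lt_top)).ne
  have hgoal1 : (∫⁻ z, ENNReal.ofReal ((∑ r ∈ 𝒞, (dyadicR r).indicator 1 z) ^ p)) ≤ X := by
    rw [hX]
    refine lintegral_mono fun z => ?_
    set S : ℝ := ∑ r ∈ 𝒞, (dyadicR r).indicator 1 z with hS
    have hSnn : 0 ≤ S :=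
      Finset.sum_nonneg fun r _ => Set.indicator_apply_nonneg (fun _ => zero_le_one)
    have hSFe : ENNReal.ofReal S = Fe z := by
      rw [hS, hFe, ENNReal.ofReal_sum_of_nonneg
        (f := fun r => (dyadicR r).indicator (1:(ℝ×ℝ)→ℝ) z)
        (fun r _ => Set.indicator_apply_nonneg (fun _ => zero_le_one))]
      refine Finset.sum_congr rfl fun r _ => ?_
      by_cases h : z ∈ dyadicR r
      · rw [Set.indicator_of_mem h, Set.indicator_of_mem h, Pi.one_apply, Pi.one_apply,
          ENNReal.ofReal_one]
      · rw [Set.indicator_of_notMem h, Set.indicator_of_notMem h, ENNReal.ofReal_zero]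
    rcases eq_or_lt_of_le hSnn with h0 | h0
    · rw [← h0, Real.zero_rpow (by linarith : p ≠ 0), ENNReal.ofReal_zero]
      exact bot_le
    · have hex : ∃ r ∈ 𝒞, z ∈ dyadicR r := by
        by_contra hno
        push_neg at hno
        have hz : S = 0 := Finset.sum_eq_zero fun r hr => Set.indicator_of_notMem (hno r hr) 1
        rw [hz] at h0
        exact absurd h0 (lt_irrefl 0)
      obtain ⟨r0, hr0, hz0⟩ := hex
      have h1S : 1 ≤ S := by
        have h := Finset.single_le_sum (f := fun r => (dyadicR r).indicator (1:(ℝ×ℝ)→ℝ) z)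
          (fun r _ => Set.indicator_apply_nonneg fun _ => zero_le_one) hr0
        simpa [Set.indicator_of_mem hz0] using h
      calc ENNReal.ofReal (S ^ p) ≤ ENNReal.ofReal (S ^ ((n:ℕ):ℝ)) :=
            ENNReal.ofReal_le_ofReal (Real.rpow_le_rpow_of_exponent_le h1S hpn)
        _ = ENNReal.ofReal (S ^ (n:ℕ)) := by rw [Real.rpow_natCast]
        _ = (ENNReal.ofReal S) ^ (n:ℕ) := by rw [ENNReal.ofReal_pow hSnn]
        _ = Fe z ^ n := by rw [hSFe]
  rcases eq_or_ne (volume Ω) ⊤ with hΩT | hΩT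
  · rw [hΩT, ENNReal.mul_top (by
      have h := Real.rpow_pos_of_pos (lt_of_lt_of_le one_pos hC1) p
      exact (ENNReal.ofReal_pos.2 h).ne')]
    exact le_top
  · have hXK : X ≤ K ^ (n:ℝ) * volume Ω := by
      rcases eq_or_ne X 0 with h0 | h0
      · rw [h0]; exact bot_le
      have hXpos : 0 < X := pos_iff_ne_zero.2 h0
      have hXq0 : X ^ (1/q) ≠ 0 := (ENNReal.rpow_pos hXpos hXfin).ne'
      have hXqt : X ^ (1/q) ≠ ⊤ := ENNReal.rpow_ne_top_of_nonneg hq0 hXfin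
      have hsplit : X ^ (1/q) * X ^ (1/(n:ℝ)) = X := by
        rw [← ENNReal.rpow_add _ _ h0 hXfin]
        have h1 : 1/q + 1/(n:ℝ) = 1 := by
          have h := hcon.symm.inv_add_inv_eq_one
          rw [one_div, one_div]
          exact h
        rw [h1, ENNReal.rpow_one]
      have hstep : X ^ (1/(n:ℝ)) ≤ K * (volume Ω) ^ (1/(n:ℝ)) := by
        have h2 : X ^ (1/q) * X ^ (1/(n:ℝ)) ≤
            X ^ (1/q) * (K * (volume Ω) ^ (1/(n:ℝ))) := by
          rw [hsplit]
          calc X ≤ K * X ^ (1/q) * (volume Ω) ^ (1/(n:ℝ)) := hmain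
            _ = X ^ (1/q) * (K * (volume Ω) ^ (1/(n:ℝ))) := by ring
        exact (ENNReal.mul_le_mul_iff_right hXq0 hXqt).1 h2
      have hinv : 1/(n:ℝ) * (n:ℝ) = 1 := by field_simp
      calc X = (X ^ (1/(n:ℝ))) ^ ((n:ℝ)) := by
            rw [← ENNReal.rpow_mul, hinv, ENNReal.rpow_one]
        _ ≤ (K * (volume Ω) ^ (1/(n:ℝ))) ^ ((n:ℝ)) :=
            ENNReal.rpow_le_rpow hstep (by positivity)
        _ = K ^ (n:ℝ) * volume Ω := by
            rw [ENNReal.mul_rpow_of_nonneg _ _ (by positivity : (0:ℝ) ≤ (n:ℝ))]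
            congr 1
            rw [← ENNReal.rpow_mul, hinv, ENNReal.rpow_one]
    calc (∫⁻ z, ENNReal.ofReal ((∑ r ∈ 𝒞, (dyadicR r).indicator 1 z) ^ p)) ≤ X := hgoal1
      _ ≤ K ^ (n:ℝ) * volume Ω := hXK
      _ ≤ ENNReal.ofReal (C ^ p) * volume Ω := mul_le_mul_left hCp _

end
end
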